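/- arXiv:0805.0432 — 9 statements merged into one kernel-verified Lean document; each statement's English description precedes it below -/
import Mathlib

section
/- In a monoidal dagger category with duals, the following three conditions on the duality structure are equivalent: (1) ((-)^{*L})† = ((-)†)^{*L}; (2) ((-)^{*R})† = ((-)†)^{*R}; (3) the left duality functor equals the right duality functor, (-)^{*L} = (-)^{*R}. -/
open CategoryTheory MonoidalCategory

namespace QAlg

variable {C : Type*} [Category C] [MonoidalCategory C]

/-- A dagger structure on a category. -/
structure Dagger (C : Type*) [Category C] where
  dag : ∀ {X Y : C}, (X ⟶ Y) → (Y ⟶ X)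
  dag_dag : ∀ {X Y : C} (f : X ⟶ Y), dag (dag f) = f
  dag_id : ∀ X : C, dag (𝟙 X) = 𝟙 X
  dag_comp : ∀ {X Y Z : C} (f : X ⟶ Y) (g : Y ⟶ Z), dag (f ≫ g) = dag g ≫ dag f

/-- A monoidal dagger category: the dagger is monoidal and the coherence
isomorphisms are unitary. -/
structure MonoidalDagger (C : Type*) [Category C] [MonoidalCategory C] extends Dagger C where
  dag_tensorHom : ∀ {W X Y Z : C} (f : W ⟶ X) (g : Y ⟶ Z), dag (f ⊗ₘ g) = dag f ⊗ₘ dag g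
  dag_associator : ∀ X Y Z : C, dag (α_ X Y Z).hom = (α_ X Y Z).inv
  dag_leftUnitor : ∀ X : C, dag (λ_ X).hom = (λ_ X).inv
  dag_rightUnitor : ∀ X : C, dag (ρ_ X).hom = (ρ_ X).inv

/-- A morphism is unitary if its dagger is its inverse. -/
def Dagger.IsUnitary (D : Dagger C) {X Y : C} (f : X ⟶ Y) : Prop :=
  f ≫ D.dag f = 𝟙 X ∧ D.dag f ≫ f = 𝟙 Y

/-- Assigned duals and left/right duality morphisms, compatible with the dagger
(the compatibility equations between the duality morphisms, but *not* yet the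
condition `((-)^{*L})† = ((-)†)^{*L}`). -/
structure PreDuals (D : MonoidalDagger C) where
  star : C → C
  ε : ∀ A : C, 𝟙_ C ⟶ star A ⊗ A
  η : ∀ A : C, A ⊗ star A ⟶ 𝟙_ C
  εR : ∀ A : C, 𝟙_ C ⟶ A ⊗ star A
  ηR : ∀ A : C, star A ⊗ A ⟶ 𝟙_ C
  triangle_left₁ : ∀ A : C,
    (ρ_ A).inv ≫ (A ◁ ε A) ≫ (α_ A (star A) A).inv ≫ (η A ▷ A) ≫ (λ_ A).hom = 𝟙 A
  triangle_left₂ : ∀ A : C,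
    (λ_ (star A)).inv ≫ (ε A ▷ star A) ≫ (α_ (star A) A (star A)).hom ≫
      (star A ◁ η A) ≫ (ρ_ (star A)).hom = 𝟙 (star A)
  triangle_right₁ : ∀ A : C,
    (λ_ A).inv ≫ (εR A ▷ A) ≫ (α_ A (star A) A).hom ≫ (A ◁ ηR A) ≫ (ρ_ A).hom = 𝟙 A
  triangle_right₂ : ∀ A : C,
    (ρ_ (star A)).inv ≫ (star A ◁ εR A) ≫ (α_ (star A) A (star A)).inv ≫
      (ηR A ▷ star A) ≫ (λ_ (star A)).hom = 𝟙 (star A)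
  star_star : ∀ A : C, star (star A) = A
  star_tensor : ∀ A B : C, star (A ⊗ B) = star B ⊗ star A
  star_unit : star (𝟙_ C) = 𝟙_ C
  ε_eq_dag_ηR : ∀ A : C, ε A = D.dag (ηR A)
  η_eq_dag_εR : ∀ A : C, η A = D.dag (εR A)
  ε_eq_dag_η_star : ∀ A : C,
    ε A = D.dag (η (star A)) ≫ (star A ◁ eqToHom (star_star A))
  ε_eq_εR_star : ∀ A : C,
    ε A = εR (star A) ≫ (star A ◁ eqToHom (star_star A))
  η_eq_dag_ε_star : ∀ A : C,
    η A = (eqToHom (star_star A).symm ▷ star A) ≫ D.dag (ε (star A))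
  η_eq_ηR_star : ∀ A : C,
    η A = (eqToHom (star_star A).symm ▷ star A) ≫ ηR (star A)

variable {D : MonoidalDagger C}

/-- The left duality functor on morphisms. -/
def PreDuals.starL (P : PreDuals D) {A B : C} (f : A ⟶ B) : P.star B ⟶ P.star A :=
  (λ_ (P.star B)).inv ≫ (P.ε A ▷ P.star B) ≫ (α_ (P.star A) A (P.star B)).hom ≫
    (P.star A ◁ (f ▷ P.star B)) ≫ (P.star A ◁ P.η B) ≫ (ρ_ (P.star A)).hom

/-- The right duality functor on morphisms. -/
def PreDuals.starR (P : PreDuals D) {A B : C} (f : A ⟶ B) : P.star B ⟶ P.star A :=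
  (ρ_ (P.star B)).inv ≫ (P.star B ◁ P.εR A) ≫ (α_ (P.star B) A (P.star A)).inv ≫
    ((P.star B ◁ f) ▷ P.star A) ≫ (P.ηR B ▷ P.star A) ≫ (λ_ (P.star A)).hom

/-- A monoidal dagger category with duals: additionally `((-)^{*L})† = ((-)†)^{*L}`. -/
structure Duals (D : MonoidalDagger C) extends PreDuals D where
  dag_starL : ∀ {A B : C} (f : A ⟶ B),
    D.dag (toPreDuals.starL f) = toPreDuals.starL (D.dag f)

/-- The conjugation functor `f ↦ f_* = (f^*)† = (f†)^*`. -/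
def Duals.conj (P : Duals D) {A B : C} (f : A ⟶ B) : P.star A ⟶ P.star B :=
  D.dag (P.starL f)

/-- The abstract dimension of an object, `ε† ∘ ε`. -/
def Duals.dim (P : Duals D) (A : C) : 𝟙_ C ⟶ 𝟙_ C :=
  P.ε A ≫ D.dag (P.ε A)

/-- Monoid data on an object. -/
structure MonoidOn (A : C) where
  m : A ⊗ A ⟶ A
  u : 𝟙_ C ⟶ A

/-- The monoid axioms. -/
def MonoidOn.IsMonoid {A : C} (M : MonoidOn A) : Prop :=
  ((M.u ▷ A) ≫ M.m = (λ_ A).hom) ∧ ((A ◁ M.u) ≫ M.m = (ρ_ A).hom) ∧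
    ((M.m ▷ A) ≫ M.m = (α_ A A A).hom ≫ (A ◁ M.m) ≫ M.m)

/-- The dagger Frobenius condition: the adjoint comonoid satisfies the
Frobenius law with the monoid. -/
def MonoidOn.IsDagFrobenius {A : C} (M : MonoidOn A) (D : MonoidalDagger C) : Prop :=
  ((D.dag M.m ▷ A) ≫ (α_ A A A).hom ≫ (A ◁ M.m) = M.m ≫ D.dag M.m) ∧
    ((A ◁ D.dag M.m) ≫ (α_ A A A).inv ≫ (M.m ▷ A) = M.m ≫ D.dag M.m)

/-- The canonical left involution of a dagger Frobenius monoid. -/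
def Duals.sL (P : Duals D) {A : C} (M : MonoidOn A) : A ⟶ P.star A :=
  (ρ_ A).inv ≫ (A ◁ (P.ε (P.star A) ≫ (eqToHom (P.star_star A) ▷ P.star A))) ≫
    (α_ A A (P.star A)).inv ≫ ((M.m ≫ D.dag M.u) ▷ P.star A) ≫ (λ_ (P.star A)).hom

/-- The canonical right involution of a dagger Frobenius monoid. -/
def Duals.sR (P : Duals D) {A : C} (M : MonoidOn A) : A ⟶ P.star A :=
  (λ_ A).inv ≫ (P.ε A ▷ A) ≫ (α_ (P.star A) A A).hom ≫
    (P.star A ◁ (M.m ≫ D.dag M.u)) ≫ (ρ_ (P.star A)).hom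

/-- Multiplication of the conjugate monoid on `A*`. -/
def Duals.conjMul (P : Duals D) {A : C} (M : MonoidOn A) : P.star A ⊗ P.star A ⟶ P.star A :=
  eqToHom (P.star_tensor A A).symm ≫ P.conj M.m

/-- Unit of the conjugate monoid on `A*`. -/
def Duals.conjUnit (P : Duals D) {A : C} (M : MonoidOn A) : 𝟙_ C ⟶ P.star A :=
  eqToHom P.star_unit.symm ≫ P.conj M.u

/-- `s : A ⟶ A*` makes the monoid `M` into an involution monoid: it is a monoid
homomorphism to the conjugate monoid and satisfies `s_* ∘ s = id` (via `A** = A`). -/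
def Duals.IsInvolutionMonoid (P : Duals D) {A : C} (M : MonoidOn A) (s : A ⟶ P.star A) : Prop :=
  (M.m ≫ s = (s ⊗ₘ s) ≫ P.conjMul M) ∧ (M.u ≫ s = P.conjUnit M) ∧
    (s ≫ P.conj s ≫ eqToHom (P.star_star A) = 𝟙 A)

/-- Monoid homomorphism property. -/
def IsMonoidHom {A B : C} (M : MonoidOn A) (N : MonoidOn B) (f : A ⟶ B) : Prop :=
  (M.m ≫ f = (f ⊗ₘ f) ≫ N.m) ∧ (M.u ≫ f = N.u)

/-- The endomorphism monoid `End(A)` on `A* ⊗ A`. -/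
def Duals.endM (P : Duals D) (A : C) : MonoidOn (P.star A ⊗ A) where
  m := (α_ (P.star A) A (P.star A ⊗ A)).hom ≫ (P.star A ◁ (α_ A (P.star A) A).inv) ≫
    (P.star A ◁ (P.η A ▷ A)) ≫ (P.star A ◁ (λ_ A).hom)
  u := P.ε A


lemma dag_whiskerLeft (D : MonoidalDagger C) (X : C) {Y Z : C} (f : Y ⟶ Z) :
    D.dag (X ◁ f) = X ◁ D.dag f := by
  rw [← id_tensorHom, ← id_tensorHom, D.dag_tensorHom, D.dag_id]

lemma dag_whiskerRight (D : MonoidalDagger C) {Y Z : C} (f : Y ⟶ Z) (X : C) :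
    D.dag (f ▷ X) = D.dag f ▷ X := by
  rw [← tensorHom_id, ← tensorHom_id, D.dag_tensorHom, D.dag_id]

lemma dag_associator_inv (D : MonoidalDagger C) (X Y Z : C) :
    D.dag (α_ X Y Z).inv = (α_ X Y Z).hom := by
  conv_lhs => rw [← D.dag_associator, D.dag_dag]

lemma dag_leftUnitor_inv (D : MonoidalDagger C) (X : C) :
    D.dag (λ_ X).inv = (λ_ X).hom := by
  conv_lhs => rw [← D.dag_leftUnitor, D.dag_dag]

lemma dag_rightUnitor_inv (D : MonoidalDagger C) (X : C) :
    D.dag (ρ_ X).inv = (ρ_ X).hom := by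
  conv_lhs => rw [← D.dag_rightUnitor, D.dag_dag]

lemma PreDuals.dag_ε {D : MonoidalDagger C} (P : PreDuals D) (A : C) :
    D.dag (P.ε A) = P.ηR A := by
  rw [P.ε_eq_dag_ηR, D.dag_dag]

lemma PreDuals.dag_η {D : MonoidalDagger C} (P : PreDuals D) (A : C) :
    D.dag (P.η A) = P.εR A := by
  rw [P.η_eq_dag_εR, D.dag_dag]

/-- Key lemma: the dagger of `starL f` is always `starR (dag f)`. -/
lemma PreDuals.dag_starL_eq_starR_dag {D : MonoidalDagger C} (P : PreDuals D)
    {A B : C} (f : A ⟶ B) : D.dag (P.starL f) = P.starR (D.dag f) := by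
  unfold PreDuals.starL PreDuals.starR
  simp only [D.dag_comp, dag_whiskerLeft, dag_whiskerRight, D.dag_associator,
    D.dag_leftUnitor, D.dag_rightUnitor, dag_leftUnitor_inv, dag_rightUnitor_inv,
    P.dag_ε, P.dag_η, Category.assoc]
  rw [associator_inv_naturality_middle_assoc]

lemma PreDuals.dag_starR_eq_starL_dag {D : MonoidalDagger C} (P : PreDuals D)
    {A B : C} (f : A ⟶ B) : D.dag (P.starR f) = P.starL (D.dag f) := by
  have := P.dag_starL_eq_starR_dag (D.dag f)
  rw [D.dag_dag] at this
  rw [← this, D.dag_dag]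

theorem stmt2 {C : Type*} [Category C] [MonoidalCategory C] {D : MonoidalDagger C}
    (P : PreDuals D) :
    ((∀ (A B : C) (f : A ⟶ B), D.dag (P.starL f) = P.starL (D.dag f)) ↔
      (∀ (A B : C) (f : A ⟶ B), P.starL f = P.starR f)) ∧
    ((∀ (A B : C) (f : A ⟶ B), D.dag (P.starR f) = P.starR (D.dag f)) ↔
      (∀ (A B : C) (f : A ⟶ B), P.starL f = P.starR f)) := by
  constructor
  · constructor
    · intro h A B f
      have h1 := h B A (D.dag f)
      rw [P.dag_starL_eq_starR_dag, D.dag_dag] at h1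
      exact h1.symm
    · intro h A B f
      rw [P.dag_starL_eq_starR_dag, h]
  · constructor
    · intro h A B f
      have h1 := h B A (D.dag f)
      rw [P.dag_starR_eq_starL_dag, D.dag_dag] at h1
      exact h1
    · intro h A B f
      rw [P.dag_starR_eq_starL_dag, h]

end QAlg
end

section
/- For a finite-dimensional unital associative algebra A over ℂ equipped with a Hermitian inner product, there is a bijective correspondence between (i) antilinear involutions t : A → A that reverse multiplication and preserve the unit, and (ii) linear maps s : A → A* to the dual space satisfying s_* ∘ s = id_A which are algebra homomorphisms to the conjugate algebra structure on A*; moreover, linear maps between two such algebras intertwining the antilinear involutions correspond exactly to linear maps satisfying the condition s_B ∘ f = f_* ∘ s_A. -/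
noncomputable section

namespace QAlg

open InnerProductSpace

variable (A : Type*) [NormedAddCommGroup A] [InnerProductSpace ℂ A] [FiniteDimensional ℂ A]

/-- Structure 1: an antilinear involution `t` on the algebra `(A, m, u)` which is
an order-reversing unital algebra homomorphism. -/
structure StarStruct (m : A →ₗ[ℂ] A →ₗ[ℂ] A) (u : A) where
  t : A → A
  map_add : ∀ x y : A, t (x + y) = t x + t y
  map_smul : ∀ (c : ℂ) (x : A), t (c • x) = starRingEnd ℂ c • t x
  invol : ∀ x : A, t (t x) = x
  antihom : ∀ x y : A, t (m x y) = m (t y) (t x)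
  unit : t u = u

/-- Structure 2: a linear map `s : A → A*` to the dual space satisfying
`s_* ∘ s = id` which is an algebra homomorphism to the conjugate algebra on `A*`.
The conjugation functor is expressed via the Riesz (anti-)isomorphism
`toDual : A ≃ A*`: conjugate elements correspond under `toDual`, the conjugate
multiplication is `(φ, ψ) ↦ toDual (m (toDual⁻¹ ψ) (toDual⁻¹ φ))` (order reversed,
by `(A ⊗ A)* = A* ⊗ A*` with reversal) with unit `toDual u`, and `s_* ∘ s = id`
is read through the identification `A** = A`. -/
structure DualStruct (m : A →ₗ[ℂ] A →ₗ[ℂ] A) (u : A) where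
  s : A →ₗ[ℂ] StrongDual ℂ A
  invol : ∀ x : A, (toDual ℂ A).symm (s ((toDual ℂ A).symm (s x))) = x
  mul : ∀ x y : A, s (m x y) =
    toDual ℂ A (m ((toDual ℂ A).symm (s y)) ((toDual ℂ A).symm (s x)))
  unit : s u = toDual ℂ A u

theorem stmt3 (m : A →ₗ[ℂ] A →ₗ[ℂ] A) (u : A)
    (hassoc : ∀ a b c : A, m (m a b) c = m a (m b c))
    (hul : ∀ a : A, m u a = a) (hur : ∀ a : A, m a u = a)
    -- the correspondence s(φ) = (t(φ))_* = toDual (t φ) is bijective: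
    (B : Type*) [NormedAddCommGroup B] [InnerProductSpace ℂ B] [FiniteDimensional ℂ B]
    (n : B →ₗ[ℂ] B →ₗ[ℂ] B) (v : B)
    (hassoc' : ∀ a b c : B, n (n a b) c = n a (n b c))
    (hul' : ∀ a : B, n v a = a) (hur' : ∀ a : B, n a v = a) :
    (∃ e : StarStruct A m u ≃ DualStruct A m u,
      ∀ (T : StarStruct A m u) (x : A), (e T).s x = toDual ℂ A (T.t x)) ∧
    -- and linear maps intertwining the antilinear involutions correspond exactly
    -- to linear maps satisfying `s_B ∘ f = f_* ∘ s_A`: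
    (∀ (TA : StarStruct A m u) (TB : StarStruct B n v)
        (SA : DualStruct A m u) (SB : DualStruct B n v),
      (∀ x : A, SA.s x = toDual ℂ A (TA.t x)) →
      (∀ x : B, SB.s x = toDual ℂ B (TB.t x)) →
      ∀ f : A →ₗ[ℂ] B,
        ((∀ x : A, TB.t (f x) = f (TA.t x)) ↔
          (∀ x : A, SB.s (f x) = toDual ℂ B (f ((toDual ℂ A).symm (SA.s x)))))) := by
  constructor
  · refine ⟨{
      toFun := fun T => {
        s := {
          toFun := fun x => toDual ℂ A (T.t x)
          map_add' := fun x y => by beta_reduce; rw [T.map_add]; exact map_add _ _ _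
          map_smul' := fun c x => by
            simp [T.map_smul, map_smulₛₗ] }
        invol := fun x => by simp [T.invol]
        mul := fun x y => by simp [T.antihom]
        unit := by simp [T.unit] }
      invFun := fun S => {
        t := fun x => (toDual ℂ A).symm (S.s x)
        map_add := fun x y => by simp
        map_smul := fun c x => by simp [map_smulₛₗ]
        invol := S.invol
        antihom := fun x y => by simp [S.mul]
        unit := by simp [S.unit] }
      left_inv := fun T => by
        cases T with
        | mk t ma ms inv ah un =>
          simp only [StarStruct.mk.injEq]
          funext x
          simp
      right_inv := fun S => by
        cases S with
        | mk s inv mu un =>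
          simp only [DualStruct.mk.injEq]
          apply LinearMap.ext
          intro x
          simp }, ?_⟩
    intro T x
    rfl
  · intro TA TB SA SB hA hB f
    constructor
    · intro h x
      rw [hB, h, hA]
      simp
    · intro h x
      have := h x
      rw [hB, hA] at this
      have := (toDual ℂ B).injective this
      simpa using this

end QAlg
end
end

section
/- In a monoidal dagger category with duals, the left involution s_L and the right involution s_R of a dagger Frobenius monoid (A, m, u) satisfy: (s_L)* = s_R and (s_R)* = s_L; (s_L)_* = s_L^{-1} and (s_R)_* = s_R^{-1}; and s_L^{-1} = (s_R)† and s_R^{-1} = (s_L)†. In particular s_L and s_R are isomorphisms. -/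
open CategoryTheory MonoidalCategory

namespace QAlg

variable {C : Type*} [Category C] [MonoidalCategory C]

variable {D : MonoidalDagger C}

section Aux

lemma Dagger.dag_eqToHom (D : Dagger C) {X Y : C} (h : X = Y) :
    D.dag (eqToHom h) = eqToHom h.symm := by
  subst h; simp [D.dag_id]

namespace MonoidalDagger

variable (D : MonoidalDagger C)

lemma dag_whiskerLeft (X : C) {Y Z : C} (f : Y ⟶ Z) :
    D.dag (X ◁ f) = X ◁ D.dag f := by
  rw [← MonoidalCategory.id_tensorHom, D.dag_tensorHom, D.dag_id,
    MonoidalCategory.id_tensorHom]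

lemma dag_whiskerRight {Y Z : C} (f : Y ⟶ Z) (X : C) :
    D.dag (f ▷ X) = D.dag f ▷ X := by
  rw [← MonoidalCategory.tensorHom_id, D.dag_tensorHom, D.dag_id,
    MonoidalCategory.tensorHom_id]

lemma dag_leftUnitor_inv (X : C) : D.dag (λ_ X).inv = (λ_ X).hom := by
  rw [← D.dag_leftUnitor, D.dag_dag]

lemma dag_rightUnitor_inv (X : C) : D.dag (ρ_ X).inv = (ρ_ X).hom := by
  rw [← D.dag_rightUnitor, D.dag_dag]

lemma dag_associator_inv (X Y Z : C) : D.dag (α_ X Y Z).inv = (α_ X Y Z).hom := by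
  rw [← D.dag_associator, D.dag_dag]

end MonoidalDagger

/-- bend: cup on the right, cap eating the two left strands. -/
def bendL (A : C) {X Y : C} (q : 𝟙_ C ⟶ X ⊗ Y) (p : A ⊗ X ⟶ 𝟙_ C) : A ⟶ Y :=
  (ρ_ A).inv ≫ (A ◁ q) ≫ (α_ A X Y).inv ≫ (p ▷ Y) ≫ (λ_ Y).hom

/-- bend: cup on the left, cap eating the two right strands. -/
def bendM {A B : C} (Z : C) (q : 𝟙_ C ⟶ A ⊗ B) (p : B ⊗ Z ⟶ 𝟙_ C) : Z ⟶ A :=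
  (λ_ Z).inv ≫ (q ▷ Z) ≫ (α_ A B Z).hom ≫ (A ◁ p) ≫ (ρ_ A).hom

lemma dag_bendL (D : MonoidalDagger C) (A : C) {X Y : C}
    (q : 𝟙_ C ⟶ X ⊗ Y) (p : A ⊗ X ⟶ 𝟙_ C) :
    D.dag (bendL A q p) = bendM Y (D.dag p) (D.dag q) := by
  simp only [bendL, bendM, D.dag_comp, D.dag_leftUnitor, D.dag_associator_inv,
    D.dag_rightUnitor_inv, D.dag_whiskerLeft, D.dag_whiskerRight, Category.assoc]

lemma dag_bendM (D : MonoidalDagger C) {A B : C} (Z : C)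
    (q : 𝟙_ C ⟶ A ⊗ B) (p : B ⊗ Z ⟶ 𝟙_ C) :
    D.dag (bendM Z q p) = bendL A (D.dag p) (D.dag q) := by
  simp only [bendL, bendM, D.dag_comp, D.dag_rightUnitor, D.dag_associator,
    D.dag_leftUnitor_inv, D.dag_whiskerLeft, D.dag_whiskerRight, Category.assoc]

lemma bendL_natR {A X Y Y' : C} (q : 𝟙_ C ⟶ X ⊗ Y) (p : A ⊗ X ⟶ 𝟙_ C) (f : Y ⟶ Y') :
    bendL A q p ≫ f = bendL A (q ≫ (X ◁ f)) p := by
  simp only [bendL, MonoidalCategory.whiskerLeft_comp, Category.assoc]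
  rw [← leftUnitor_naturality, ← whisker_exchange_assoc, ← associator_inv_naturality_right_assoc]

lemma bendL_natL {A A' X Y : C} (q : 𝟙_ C ⟶ X ⊗ Y) (p : A ⊗ X ⟶ 𝟙_ C) (g : A' ⟶ A) :
    g ≫ bendL A q p = bendL A' q ((g ▷ X) ≫ p) := by
  simp only [bendL, comp_whiskerRight, Category.assoc]
  rw [rightUnitor_inv_naturality_assoc, ← whisker_exchange_assoc,
    associator_inv_naturality_left_assoc]

lemma bendL_mid {A X Z W : C} (q' : 𝟙_ C ⟶ Z ⊗ W) (p : A ⊗ X ⟶ 𝟙_ C) (g : Z ⟶ X) :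
    bendL A (q' ≫ (g ▷ W)) p = bendL A q' ((A ◁ g) ≫ p) := by
  simp only [bendL, MonoidalCategory.whiskerLeft_comp, comp_whiskerRight, Category.assoc]
  rw [associator_inv_naturality_middle_assoc]

lemma bendM_natL {A B Z Z' : C} (q : 𝟙_ C ⟶ A ⊗ B) (p : B ⊗ Z ⟶ 𝟙_ C) (f : Z' ⟶ Z) :
    f ≫ bendM Z q p = bendM Z' q ((B ◁ f) ≫ p) := by
  simp only [bendM, MonoidalCategory.whiskerLeft_comp, Category.assoc]
  rw [leftUnitor_inv_naturality_assoc, whisker_exchange_assoc,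
    associator_naturality_right_assoc]

lemma bendM_natR {A A' B Z : C} (q : 𝟙_ C ⟶ A ⊗ B) (p : B ⊗ Z ⟶ 𝟙_ C) (g : A ⟶ A') :
    bendM Z q p ≫ g = bendM Z (q ≫ (g ▷ B)) p := by
  simp only [bendM, comp_whiskerRight, Category.assoc]
  rw [← rightUnitor_naturality, whisker_exchange_assoc, ← associator_naturality_left_assoc]

lemma bendM_mid {A B B' Z : C} (q : 𝟙_ C ⟶ A ⊗ B') (p : B ⊗ Z ⟶ 𝟙_ C) (g : B' ⟶ B) :
    bendM Z (q ≫ (A ◁ g)) p = bendM Z q ((g ▷ Z) ≫ p) := by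
  simp only [bendM, MonoidalCategory.whiskerLeft_comp, comp_whiskerRight, Category.assoc]
  rw [associator_naturality_middle_assoc]

lemma cup_exchange {U V : C} (q : 𝟙_ C ⟶ U) (q' : 𝟙_ C ⟶ V) :
    q' ≫ (λ_ V).inv ≫ (q ▷ V) = q ≫ (ρ_ U).inv ≫ (U ◁ q') := by
  rw [leftUnitor_inv_naturality_assoc, whisker_exchange, rightUnitor_inv_naturality_assoc,
    unitors_inv_equal]

lemma cup_slide {X Y Z W : C} (q : 𝟙_ C ⟶ X ⊗ Y) (q' : 𝟙_ C ⟶ Z ⊗ W)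
    (p' : Y ⊗ Z ⟶ 𝟙_ C) :
    q ≫ (X ◁ bendL Y q' p') = q' ≫ (bendM Z q p' ▷ W) := by
  simp only [bendL, bendM, MonoidalCategory.whiskerLeft_comp, comp_whiskerRight,
    Category.assoc]
  rw [whiskerLeft_rightUnitor_inv, leftUnitor_inv_whiskerRight]
  simp only [Category.assoc]
  rw [← associator_naturality_right_assoc, ← associator_inv_naturality_left_assoc,
    reassoc_of% cup_exchange q q', ← MonoidalCategory.triangle,
    associator_naturality_middle_assoc]
  coherence

lemma cap_exchange {U V : C} (p : U ⟶ 𝟙_ C) (p' : V ⟶ 𝟙_ C) :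
    (p ▷ V) ≫ (λ_ V).hom ≫ p' = (U ◁ p') ≫ (ρ_ U).hom ≫ p := by
  rw [← leftUnitor_naturality, ← whisker_exchange_assoc, ← rightUnitor_naturality,
    unitors_equal]

lemma cup_slide' {A A'' B B' : C} (q : 𝟙_ C ⟶ A ⊗ B) (q' : 𝟙_ C ⟶ A'' ⊗ B')
    (p' : B' ⊗ A ⟶ 𝟙_ C) :
    q ≫ (bendM A q' p' ▷ B) = q' ≫ (A'' ◁ bendL B' q p') :=
  (cup_slide q' q p').symm

lemma bendL_cap {A X Y Z : C} (q : 𝟙_ C ⟶ X ⊗ Y) (p : A ⊗ X ⟶ 𝟙_ C)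
    (p'' : Y ⊗ Z ⟶ 𝟙_ C) :
    (bendL A q p ▷ Z) ≫ p'' = (A ◁ bendM Z q p'') ≫ p := by
  simp only [bendL, bendM, MonoidalCategory.whiskerLeft_comp, comp_whiskerRight,
    Category.assoc]
  rw [show (λ_ Y).hom ▷ Z = (α_ (𝟙_ C) Y Z).hom ≫ (λ_ (Y ⊗ Z)).hom from by coherence]
  simp only [Category.assoc]
  rw [associator_naturality_left_assoc, cap_exchange]
  rw [show (ρ_ (A ⊗ X)).hom = (α_ A X (𝟙_ C)).hom ≫ (A ◁ (ρ_ X).hom) from by coherence]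
  simp only [Category.assoc]
  rw [associator_naturality_right_assoc]
  rw [show A ◁ (λ_ Z).inv = ((ρ_ A).inv ▷ Z) ≫ (α_ A (𝟙_ C) Z).hom from by coherence]
  simp only [Category.assoc]
  rw [← associator_naturality_middle_assoc]
  coherence


lemma bendL_bendL {A X Y Z W : C} (q : 𝟙_ C ⟶ X ⊗ Y) (p : A ⊗ X ⟶ 𝟙_ C)
    (q' : 𝟙_ C ⟶ Z ⊗ W) (p' : Y ⊗ Z ⟶ 𝟙_ C) :
    bendL A q p ≫ bendL Y q' p' = bendL A q' ((A ◁ bendM Z q p') ≫ p) := by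
  rw [bendL_natR, cup_slide, ← bendL_mid]

lemma bendM_bendM {A A'' B B' Z : C} (q : 𝟙_ C ⟶ A ⊗ B) (p : B ⊗ Z ⟶ 𝟙_ C)
    (q' : 𝟙_ C ⟶ A'' ⊗ B') (p' : B' ⊗ A ⟶ 𝟙_ C) :
    bendM Z q p ≫ bendM A q' p' = bendM Z q' ((bendL B' q p' ▷ Z) ≫ p) := by
  rw [bendM_natR, cup_slide', bendM_mid]

end Aux
section Aux2

variable {D : MonoidalDagger C}

namespace PreDuals

variable (P : PreDuals D)

lemma dag_εR (A : C) : D.dag (P.εR A) = P.η A := (P.η_eq_dag_εR A).symm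

lemma dag_ηR (A : C) : D.dag (P.ηR A) = P.ε A := (P.ε_eq_dag_ηR A).symm

lemma dag_ε_s4 (A : C) : D.dag (P.ε A) = P.ηR A := by
  rw [P.ε_eq_dag_ηR, D.dag_dag]

lemma dag_η_s4 (A : C) : D.dag (P.η A) = P.εR A := by
  rw [P.η_eq_dag_εR, D.dag_dag]

lemma ηR_star (A : C) :
    P.ηR (P.star A) = (eqToHom (P.star_star A) ▷ P.star A) ≫ P.η A := by
  rw [P.η_eq_ηR_star A, ← comp_whiskerRight_assoc, eqToHom_trans, eqToHom_refl,
    MonoidalCategory.id_whiskerRight, Category.id_comp]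

lemma ε_star (A : C) :
    P.ε (P.star A) = P.εR A ≫ (eqToHom (P.star_star A).symm ▷ P.star A) := by
  rw [P.ε_eq_dag_ηR (P.star A), P.ηR_star, D.dag_comp, D.dag_whiskerRight,
    D.toDagger.dag_eqToHom, P.dag_η_s4]

lemma ε_star' (A : C) :
    P.ε (P.star A) ≫ (eqToHom (P.star_star A) ▷ P.star A) = P.εR A := by
  rw [P.ε_star, Category.assoc, ← comp_whiskerRight, eqToHom_trans, eqToHom_refl,
    MonoidalCategory.id_whiskerRight, Category.comp_id]

lemma η_star (A : C) :
    P.η (P.star A) = (P.star A ◁ eqToHom (P.star_star A)) ≫ P.ηR A := by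
  have h2 : P.ηR A = (P.star A ◁ eqToHom (P.star_star A).symm) ≫ P.η (P.star A) := by
    rw [← P.dag_ε_s4, P.ε_eq_dag_η_star A, D.dag_comp, D.dag_whiskerLeft,
      D.toDagger.dag_eqToHom, D.dag_dag]
  rw [h2, ← MonoidalCategory.whiskerLeft_comp_assoc, eqToHom_trans, eqToHom_refl,
    MonoidalCategory.whiskerLeft_id, Category.id_comp]

lemma tri_L1 (A : C) : bendL A (P.ε A) (P.η A) = 𝟙 A := P.triangle_left₁ A

lemma tri_L2 (A : C) : bendM (P.star A) (P.ε A) (P.η A) = 𝟙 (P.star A) :=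
  P.triangle_left₂ A

lemma tri_R1 (A : C) : bendM A (P.εR A) (P.ηR A) = 𝟙 A := P.triangle_right₁ A

lemma tri_R2 (A : C) : bendL (P.star A) (P.εR A) (P.ηR A) = 𝟙 (P.star A) :=
  P.triangle_right₂ A

end PreDuals

lemma snake_L {A : C} (M : MonoidOn A) (hM : M.IsMonoid) (hF : M.IsDagFrobenius D) :
    bendL A (M.u ≫ D.dag M.m) (M.m ≫ D.dag M.u) = 𝟙 A := by
  simp only [bendL, MonoidalCategory.whiskerLeft_comp, comp_whiskerRight, Category.assoc]
  rw [reassoc_of% hF.2, reassoc_of% hM.2.1]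
  have hu : D.dag M.m ≫ (D.dag M.u ▷ A) = (λ_ A).inv := by
    have h := congrArg D.dag hM.1
    rwa [D.dag_comp, D.dag_whiskerRight, D.dag_leftUnitor] at h
  rw [Iso.inv_hom_id_assoc, reassoc_of% hu, Iso.inv_hom_id]

lemma snake_M {A : C} (M : MonoidOn A) (hM : M.IsMonoid) (hF : M.IsDagFrobenius D) :
    bendM A (M.u ≫ D.dag M.m) (M.m ≫ D.dag M.u) = 𝟙 A := by
  simp only [bendM, MonoidalCategory.whiskerLeft_comp, comp_whiskerRight, Category.assoc]
  rw [reassoc_of% hF.1, reassoc_of% hM.1]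
  have hu : D.dag M.m ≫ (A ◁ D.dag M.u) = (ρ_ A).inv := by
    have h := congrArg D.dag hM.2.1
    rwa [D.dag_comp, D.dag_whiskerLeft, D.dag_rightUnitor] at h
  rw [Iso.inv_hom_id_assoc, reassoc_of% hu, Iso.inv_hom_id]

namespace Duals

variable (P : Duals D)

lemma sL_eq {A : C} (M : MonoidOn A) :
    P.sL M = bendL A (P.εR A) (M.m ≫ D.dag M.u) := by
  rw [Duals.sL, bendL, P.toPreDuals.ε_star']

lemma sR_eq {A : C} (M : MonoidOn A) :
    P.sR M = bendM A (P.ε A) (M.m ≫ D.dag M.u) := rfl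

lemma dag_sL {A : C} (M : MonoidOn A) :
    D.dag (P.sL M) = bendM (P.star A) (M.u ≫ D.dag M.m) (P.η A) := by
  rw [P.sL_eq, dag_bendL, D.dag_comp, D.dag_dag, P.toPreDuals.dag_εR]

lemma dag_sR {A : C} (M : MonoidOn A) :
    D.dag (P.sR M) = bendL (P.star A) (M.u ≫ D.dag M.m) (P.ηR A) := by
  rw [P.sR_eq, dag_bendM, D.dag_comp, D.dag_dag, P.toPreDuals.dag_ε_s4]

lemma part7 {A : C} (M : MonoidOn A) (hM : M.IsMonoid) (hF : M.IsDagFrobenius D) :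
    P.sL M ≫ D.dag (P.sR M) = 𝟙 A := by
  rw [P.sL_eq, P.dag_sR, bendL_bendL, P.toPreDuals.tri_R1,
    MonoidalCategory.whiskerLeft_id, Category.id_comp, snake_L M hM hF]

lemma part8 {A : C} (M : MonoidOn A) (hM : M.IsMonoid) (hF : M.IsDagFrobenius D) :
    D.dag (P.sR M) ≫ P.sL M = 𝟙 (P.star A) := by
  rw [P.dag_sR, P.sL_eq, bendL_bendL, snake_M M hM hF,
    MonoidalCategory.whiskerLeft_id, Category.id_comp, P.toPreDuals.tri_R2]

lemma part9 {A : C} (M : MonoidOn A) (hM : M.IsMonoid) (hF : M.IsDagFrobenius D) :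
    P.sR M ≫ D.dag (P.sL M) = 𝟙 A := by
  rw [P.sR_eq, P.dag_sL, bendM_bendM, P.toPreDuals.tri_L1,
    MonoidalCategory.id_whiskerRight, Category.id_comp, snake_M M hM hF]

lemma part10 {A : C} (M : MonoidOn A) (hM : M.IsMonoid) (hF : M.IsDagFrobenius D) :
    D.dag (P.sL M) ≫ P.sR M = 𝟙 (P.star A) := by
  rw [P.dag_sL, P.sR_eq, bendM_bendM, snake_L M hM hF,
    MonoidalCategory.id_whiskerRight, Category.id_comp, P.toPreDuals.tri_L2]

lemma starL_eq' {A B : C} (f : A ⟶ B) :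
    P.starL f = bendM (P.star B) (P.ε A) ((f ▷ P.star B) ≫ P.η B) := by
  rw [PreDuals.starL, bendM, MonoidalCategory.whiskerLeft_comp]
  simp only [Category.assoc]

lemma part1 {A : C} (M : MonoidOn A) (hM : M.IsMonoid) (hF : M.IsDagFrobenius D) :
    P.starL (P.sL M) = eqToHom (P.star_star A) ≫ P.sR M := by
  rw [P.starL_eq', P.toPreDuals.η_star, ← whisker_exchange_assoc, ← bendM_natL,
    P.sL_eq, bendL_cap, P.toPreDuals.tri_R1, MonoidalCategory.whiskerLeft_id,
    Category.id_comp, ← P.sR_eq]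

lemma starL_id (A : C) : P.starL (𝟙 A) = 𝟙 (P.star A) := by
  rw [P.starL_eq', MonoidalCategory.id_whiskerRight, Category.id_comp,
    P.toPreDuals.tri_L2]

lemma starL_comp {A B E : C} (f : A ⟶ B) (g : B ⟶ E) :
    P.starL (f ≫ g) = P.starL g ≫ P.starL f := by
  rw [P.starL_eq' f, P.starL_eq' g, P.starL_eq' (f ≫ g), bendM_bendM,
    ← bendL_natL, P.toPreDuals.tri_L1, Category.comp_id, comp_whiskerRight,
    Category.assoc]

end Duals

end Aux2
theorem stmt4 {C : Type*} [Category C] [MonoidalCategory C] {D : MonoidalDagger C}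
    (P : Duals D) {A : C} (M : MonoidOn A) (hM : M.IsMonoid) (hF : M.IsDagFrobenius D) :
    (P.starL (P.sL M) = eqToHom (P.star_star A) ≫ P.sR M) ∧
    (P.starL (P.sR M) = eqToHom (P.star_star A) ≫ P.sL M) ∧
    (P.sL M ≫ P.conj (P.sL M) ≫ eqToHom (P.star_star A) = 𝟙 A) ∧
    (P.conj (P.sL M) ≫ eqToHom (P.star_star A) ≫ P.sL M = 𝟙 (P.star A)) ∧
    (P.sR M ≫ P.conj (P.sR M) ≫ eqToHom (P.star_star A) = 𝟙 A) ∧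
    (P.conj (P.sR M) ≫ eqToHom (P.star_star A) ≫ P.sR M = 𝟙 (P.star A)) ∧
    (P.sL M ≫ D.dag (P.sR M) = 𝟙 A) ∧ (D.dag (P.sR M) ≫ P.sL M = 𝟙 (P.star A)) ∧
    (P.sR M ≫ D.dag (P.sL M) = 𝟙 A) ∧ (D.dag (P.sL M) ≫ P.sR M = 𝟙 (P.star A)) ∧
    IsIso (P.sL M) ∧ IsIso (P.sR M) := by
  have p7 := P.part7 M hM hF
  have p8 := P.part8 M hM hF
  have p9 := P.part9 M hM hF
  have p10 := P.part10 M hM hF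
  have p1 := P.part1 M hM hF
  have k2 : P.starL (P.sL M) ≫ P.starL (D.dag (P.sR M)) = 𝟙 (P.star (P.star A)) := by
    rw [← P.starL_comp, p8, P.starL_id]
  have k3 : P.sR M ≫ P.starL (D.dag (P.sR M)) = eqToHom (P.star_star A).symm := by
    rw [p1, Category.assoc] at k2
    have h3 := congrArg (fun t => eqToHom (P.star_star A).symm ≫ t) k2
    simpa using h3
  have k4 : P.starL (D.dag (P.sR M)) = D.dag (P.sL M) ≫ eqToHom (P.star_star A).symm := by
    rw [← Category.id_comp (P.starL (D.dag (P.sR M))), ← p10, Category.assoc, k3]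
  have p2 : P.starL (P.sR M) = eqToHom (P.star_star A) ≫ P.sL M := by
    have hs : P.starL (P.sR M) = D.dag (P.starL (D.dag (P.sR M))) := by
      rw [P.dag_starL, D.dag_dag]
    rw [hs, k4, D.dag_comp, D.toDagger.dag_eqToHom, D.dag_dag]
  have c1 : P.conj (P.sL M) = D.dag (P.sR M) ≫ eqToHom (P.star_star A).symm := by
    rw [Duals.conj, p1, D.dag_comp, D.toDagger.dag_eqToHom]
  have c2 : P.conj (P.sR M) = D.dag (P.sL M) ≫ eqToHom (P.star_star A).symm := by
    rw [Duals.conj, p2, D.dag_comp, D.toDagger.dag_eqToHom]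
  refine ⟨p1, p2, ?_, ?_, ?_, ?_, p7, p8, p9, p10,
    ⟨D.dag (P.sR M), p7, p8⟩, ⟨D.dag (P.sL M), p9, p10⟩⟩
  · rw [c1]
    simp only [Category.assoc, eqToHom_trans, eqToHom_refl, Category.comp_id]
    exact p7
  · rw [c1]
    simp only [Category.assoc, eqToHom_trans_assoc, eqToHom_refl, Category.id_comp]
    exact p8
  · rw [c2]
    simp only [Category.assoc, eqToHom_trans, eqToHom_refl, Category.comp_id]
    exact p9
  · rw [c2]
    simp only [Category.assoc, eqToHom_trans_assoc, eqToHom_refl, Category.id_comp]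
    exact p10

end QAlg
end

section
/- In a monoidal dagger category with duals, for a unitary dagger Frobenius monoid (A, m, u), the abstract dimension of A equals the squared norm of m† ∘ u, i.e. ε_A† ∘ ε_A = u† ∘ m ∘ m† ∘ u; furthermore dim(A) = dim(A)*. -/
open CategoryTheory MonoidalCategory

namespace QAlg

variable {C : Type*} [Category C] [MonoidalCategory C]

variable {D : MonoidalDagger C}

section AuxLemmas

theorem scalar_comm' (s t : 𝟙_ C ⟶ 𝟙_ C) : s ≫ t = t ≫ s := by
  have key := whisker_exchange (C := C) s t
  have h1 : (𝟙_ C) ◁ t = (λ_ (𝟙_ C)).hom ≫ t ≫ (λ_ (𝟙_ C)).inv := by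
    rw [← cancel_mono (λ_ (𝟙_ C)).hom]
    simp [MonoidalCategory.leftUnitor_naturality]
  have h2 : s ▷ (𝟙_ C) = (ρ_ (𝟙_ C)).hom ≫ s ≫ (ρ_ (𝟙_ C)).inv := by
    rw [← cancel_mono (ρ_ (𝟙_ C)).hom]
    simp [MonoidalCategory.rightUnitor_naturality]
  have h3 : (λ_ (𝟙_ C)).inv = (ρ_ (𝟙_ C)).inv := by
    rw [Iso.inv_eq_inv]; exact unitors_equal
  rw [h1, h2, ← unitors_equal, ← h3] at key
  simpa using key.symm

theorem scalar_transpose {X : C} (h : X = 𝟙_ C) (e : 𝟙_ C ⟶ X ⊗ 𝟙_ C) (n : 𝟙_ C ⊗ X ⟶ 𝟙_ C)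
    (snake : (λ_ X).inv ≫ (e ▷ X) ≫ (α_ X (𝟙_ C) X).hom ≫ (X ◁ n) ≫ (ρ_ X).hom = 𝟙 X)
    (s : 𝟙_ C ⟶ 𝟙_ C) :
    eqToHom h.symm ≫ ((λ_ X).inv ≫ (e ▷ X) ≫ (α_ X (𝟙_ C) X).hom ≫ (X ◁ (s ▷ X)) ≫
      (X ◁ n) ≫ (ρ_ X).hom) ≫ eqToHom h = s := by
  subst h
  simp only [eqToHom_refl, Category.comp_id, Category.id_comp]
  have h2 : s ▷ (𝟙_ C) = (ρ_ (𝟙_ C)).hom ≫ s ≫ (ρ_ (𝟙_ C)).inv := by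
    rw [← cancel_mono (ρ_ (𝟙_ C)).hom]
    simp [MonoidalCategory.rightUnitor_naturality]
  have h1 : (𝟙_ C) ◁ s = (λ_ (𝟙_ C)).hom ≫ s ≫ (λ_ (𝟙_ C)).inv := by
    rw [← cancel_mono (λ_ (𝟙_ C)).hom]
    simp [MonoidalCategory.leftUnitor_naturality]
  rw [h2]
  simp only [MonoidalCategory.whiskerLeft_comp, Category.assoc]
  rw [h1]
  simp only [Category.assoc]
  have hS := scalar_comm' s
    ((λ_ (𝟙_ C)).inv ≫ ((𝟙_ C) ◁ (ρ_ (𝟙_ C)).inv) ≫ ((𝟙_ C) ◁ n) ≫ (ρ_ (𝟙_ C)).hom)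
  calc (λ_ (𝟙_ C)).inv ≫ (e ▷ 𝟙_ C) ≫ (α_ (𝟙_ C) (𝟙_ C) (𝟙_ C)).hom ≫
        ((𝟙_ C) ◁ (ρ_ (𝟙_ C)).hom) ≫ (λ_ (𝟙_ C)).hom ≫ s ≫ (λ_ (𝟙_ C)).inv ≫
        ((𝟙_ C) ◁ (ρ_ (𝟙_ C)).inv) ≫ ((𝟙_ C) ◁ n) ≫ (ρ_ (𝟙_ C)).hom
      = ((λ_ (𝟙_ C)).inv ≫ (e ▷ 𝟙_ C) ≫ (α_ (𝟙_ C) (𝟙_ C) (𝟙_ C)).hom ≫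
        ((𝟙_ C) ◁ (ρ_ (𝟙_ C)).hom) ≫ (λ_ (𝟙_ C)).hom) ≫ s ≫
        ((λ_ (𝟙_ C)).inv ≫ ((𝟙_ C) ◁ (ρ_ (𝟙_ C)).inv) ≫ ((𝟙_ C) ◁ n) ≫ (ρ_ (𝟙_ C)).hom) := by
        simp only [Category.assoc]
    _ = ((λ_ (𝟙_ C)).inv ≫ (e ▷ 𝟙_ C) ≫ (α_ (𝟙_ C) (𝟙_ C) (𝟙_ C)).hom ≫
        ((𝟙_ C) ◁ (ρ_ (𝟙_ C)).hom) ≫ (λ_ (𝟙_ C)).hom) ≫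
        ((λ_ (𝟙_ C)).inv ≫ ((𝟙_ C) ◁ (ρ_ (𝟙_ C)).inv) ≫ ((𝟙_ C) ◁ n) ≫ (ρ_ (𝟙_ C)).hom) ≫ s := by
        rw [hS]
    _ = ((λ_ (𝟙_ C)).inv ≫ (e ▷ 𝟙_ C) ≫ (α_ (𝟙_ C) (𝟙_ C) (𝟙_ C)).hom ≫
        ((𝟙_ C) ◁ n) ≫ (ρ_ (𝟙_ C)).hom) ≫ s := by
        simp only [Category.assoc, Iso.hom_inv_id_assoc]
        simp [← MonoidalCategory.whiskerLeft_comp_assoc]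
    _ = s := by rw [snake]; simp

theorem cap_slide {X Y Z : C} (f : X ⟶ 𝟙_ C) (g : Y ⊗ Z ⟶ 𝟙_ C) :
    ((f ▷ Y) ▷ Z) ≫ ((λ_ Y).hom ▷ Z) ≫ g
      = (α_ X Y Z).hom ≫ (X ◁ g) ≫ (ρ_ X).hom ≫ f := by
  rw [whiskerRight_tensor_symm f Y Z]
  slice_lhs 3 4 => rw [← leftUnitor_tensor_hom]
  slice_lhs 3 4 => rw [← MonoidalCategory.leftUnitor_naturality g]
  slice_lhs 2 3 => rw [← whisker_exchange]
  rw [unitors_equal]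
  slice_lhs 3 4 => rw [MonoidalCategory.rightUnitor_naturality]

theorem PreDuals.eR_transport (P : PreDuals D) {X A : C} (h : X = A)
    (h' : P.star X = P.star A) :
    P.εR X ≫ (eqToHom h ⊗ₘ eqToHom h') = P.εR A := by
  subst h
  have hr : h' = rfl := rfl
  subst hr
  simp

theorem Duals.cupR_eq (P : Duals D) (A : C) :
    P.ε (P.star A) ≫ (eqToHom (P.star_star A) ▷ P.star A) = P.εR A := by
  rw [P.ε_eq_εR_star (P.star A), Category.assoc, ← tensorHom_def']
  exact P.toPreDuals.eR_transport (P.star_star A) (P.star_star (P.star A))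

theorem Duals.sL_pair (P : Duals D) {A : C} (M : MonoidOn A) :
    (P.sL M ▷ A) ≫ P.ηR A = M.m ≫ D.dag M.u := by
  have key : (ρ_ A).inv ▷ A ≫ (A ◁ P.εR A) ▷ A ≫ (α_ A A (P.star A)).inv ▷ A ≫
      (α_ (A ⊗ A) (P.star A) A).hom ≫ ((A ⊗ A) ◁ P.ηR A) ≫ (ρ_ (A ⊗ A)).hom
      = A ◁ ((λ_ A).inv ≫ (P.εR A ▷ A) ≫ (α_ A (P.star A) A).hom ≫ (A ◁ P.ηR A) ≫
          (ρ_ A).hom) := by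
    monoidal
  have hcs := cap_slide (M.m ≫ D.dag M.u) (P.ηR A)
  simp only [Duals.sL]
  rw [P.cupR_eq A]
  simp only [comp_whiskerRight, Category.assoc] at hcs ⊢
  rw [hcs]
  slice_lhs 1 6 => rw [key]
  rw [P.triangle_right₁ A]
  simp

theorem Duals.epsilon_eq (P : Duals D) {A : C} (M : MonoidOn A)
    (hU : D.IsUnitary (P.sL M)) :
    P.ε A = M.u ≫ D.dag M.m ≫ (P.sL M ▷ A) := by
  have h := congrArg D.dag (P.sL_pair M)
  rw [D.dag_comp, D.dag_comp, D.dag_dag] at h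
  have hw : D.dag (P.sL M ▷ A) = D.dag (P.sL M) ▷ A := by
    rw [← tensorHom_id, D.dag_tensorHom, D.dag_id, tensorHom_id]
  rw [hw, ← P.ε_eq_dag_ηR] at h
  have h2 := congrArg (fun t => t ≫ (P.sL M ▷ A)) h
  simp only [Category.assoc] at h2
  rw [← comp_whiskerRight, hU.2, id_whiskerRight, Category.comp_id] at h2
  simpa using h2

end AuxLemmas

theorem stmt8 {C : Type*} [Category C] [MonoidalCategory C] {D : MonoidalDagger C}
    (P : Duals D) {A : C} (M : MonoidOn A) (hM : M.IsMonoid) (hF : M.IsDagFrobenius D)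
    (hU : D.IsUnitary (P.sL M)) :
    P.dim A = M.u ≫ D.dag M.m ≫ M.m ≫ D.dag M.u ∧
    eqToHom P.star_unit.symm ≫ P.starL (P.dim A) ≫ eqToHom P.star_unit = P.dim A := by
  constructor
  · have hw : D.dag (P.sL M ▷ A) = D.dag (P.sL M) ▷ A := by
      rw [← tensorHom_id, D.dag_tensorHom, D.dag_id, tensorHom_id]
    have he := P.epsilon_eq M hU
    have hdag : D.dag (P.ε A) = (D.dag (P.sL M) ▷ A) ≫ M.m ≫ D.dag M.u := by
      rw [he]
      simp only [D.dag_comp, D.dag_dag, hw, Category.assoc]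
    rw [Duals.dim, hdag, he]
    simp only [Category.assoc]
    rw [← comp_whiskerRight_assoc, hU.1, id_whiskerRight, Category.id_comp]
  · exact scalar_transpose P.star_unit (P.ε (𝟙_ C)) (P.η (𝟙_ C))
      (P.triangle_left₂ (𝟙_ C)) (P.dim A)


end QAlg
end

section
/- Let (A, m, u) be a monoid in a monoidal category in which A has a left dual A*. Then the morphism h = (id_{A*} ⊗ m) ∘ (ε_A ⊗ id_A) : A → A* ⊗ A is a monoid homomorphism from (A, m, u) to the endomorphism monoid End(A) = (A* ⊗ A, id_{A*} ⊗ η_A ⊗ id_A, ε_A), and h is a split monomorphism with retraction u* ⊗ id_A. -/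
open CategoryTheory MonoidalCategory

namespace QAlg

variable {C : Type*} [Category C] [MonoidalCategory C]

variable {D : MonoidalDagger C}

/-- Snake lemma, whiskered form. -/
lemma snake_aux (A As : C) (ε : 𝟙_ C ⟶ As ⊗ A) (η : A ⊗ As ⟶ 𝟙_ C)
    (t1 : (ρ_ A).inv ≫ (A ◁ ε) ≫ (α_ A As A).inv ≫ (η ▷ A) ≫ (λ_ A).hom = 𝟙 A)
    (M : MonoidOn A) :
    (A ◁ ((λ_ A).inv ≫ (ε ▷ A) ≫ (α_ As A A).hom ≫ (As ◁ M.m))) ≫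
      (α_ A As A).inv ≫ (η ▷ A) ≫ (λ_ A).hom = M.m := by
  have e1 : (A ◁ (As ◁ M.m)) ≫ (α_ A As A).inv = (α_ A As (A ⊗ A)).inv ≫ ((A ⊗ As) ◁ M.m) := by
    rw [associator_inv_naturality_right]
  have e2 := whisker_exchange η M.m
  have e3 : (𝟙_ C ◁ M.m) ≫ (λ_ A).hom = (λ_ (A ⊗ A)).hom ≫ M.m := by
    rw [leftUnitor_naturality]
  have key : (A ◁ (λ_ A).inv) ≫ (A ◁ (ε ▷ A)) ≫ (A ◁ (α_ As A A).hom) ≫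
      (α_ A As (A ⊗ A)).inv ≫ (η ▷ (A ⊗ A)) ≫ (λ_ (A ⊗ A)).hom =
      (((ρ_ A).inv ≫ (A ◁ ε) ≫ (α_ A As A).inv ≫ (η ▷ A) ≫ (λ_ A).hom) ▷ A) := by
    monoidal
  calc (A ◁ ((λ_ A).inv ≫ (ε ▷ A) ≫ (α_ As A A).hom ≫ (As ◁ M.m))) ≫
      (α_ A As A).inv ≫ (η ▷ A) ≫ (λ_ A).hom
      = ((A ◁ (λ_ A).inv) ≫ (A ◁ (ε ▷ A)) ≫ (A ◁ (α_ As A A).hom) ≫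
          (α_ A As (A ⊗ A)).inv ≫ (η ▷ (A ⊗ A)) ≫ (λ_ (A ⊗ A)).hom) ≫ M.m := by
        simp only [MonoidalCategory.whiskerLeft_comp, Category.assoc]
        rw [reassoc_of% e1, reassoc_of% e2, e3]
    _ = M.m := by rw [key, t1]; simp


theorem stmt12 {C : Type*} [Category C] [MonoidalCategory C]
    (A As : C) (ε : 𝟙_ C ⟶ As ⊗ A) (η : A ⊗ As ⟶ 𝟙_ C)
    (t1 : (ρ_ A).inv ≫ (A ◁ ε) ≫ (α_ A As A).inv ≫ (η ▷ A) ≫ (λ_ A).hom = 𝟙 A)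
    (t2 : (λ_ As).inv ≫ (ε ▷ As) ≫ (α_ As A As).hom ≫ (As ◁ η) ≫ (ρ_ As).hom = 𝟙 As)
    (M : MonoidOn A) (hM : M.IsMonoid) :
    (M.m ≫ ((λ_ A).inv ≫ (ε ▷ A) ≫ (α_ As A A).hom ≫ (As ◁ M.m)) =
      (((λ_ A).inv ≫ (ε ▷ A) ≫ (α_ As A A).hom ≫ (As ◁ M.m)) ⊗ₘ
        ((λ_ A).inv ≫ (ε ▷ A) ≫ (α_ As A A).hom ≫ (As ◁ M.m))) ≫
        ((α_ As A (As ⊗ A)).hom ≫ (As ◁ (α_ A As A).inv) ≫ (As ◁ (η ▷ A)) ≫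
          (As ◁ (λ_ A).hom))) ∧
    (M.u ≫ ((λ_ A).inv ≫ (ε ▷ A) ≫ (α_ As A A).hom ≫ (As ◁ M.m)) = ε) ∧
    (((λ_ A).inv ≫ (ε ▷ A) ≫ (α_ As A A).hom ≫ (As ◁ M.m)) ≫
      ((((λ_ As).inv ≫ (M.u ▷ As) ≫ η) ▷ A) ≫ (λ_ A).hom) = 𝟙 A) := by

  obtain ⟨h1, h2, h3⟩ := hM
  set h : A ⟶ As ⊗ A := (λ_ A).inv ≫ (ε ▷ A) ≫ (α_ As A A).hom ≫ (As ◁ M.m) with hh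
  refine ⟨?_, ?_, ?_⟩
  · -- multiplicativity
    have hsnake := snake_aux A As ε η t1 M
    -- reduce RHS to (h ▷ A) ≫ α ≫ (As ◁ M.m)
    have hR : (h ⊗ₘ h) ≫ ((α_ As A (As ⊗ A)).hom ≫ (As ◁ (α_ A As A).inv) ≫
        (As ◁ (η ▷ A)) ≫ (As ◁ (λ_ A).hom)) =
        (h ▷ A) ≫ (α_ As A A).hom ≫ (As ◁ M.m) := by
      rw [MonoidalCategory.tensorHom_def]
      slice_lhs 2 3 => rw [associator_naturality_right]
      simp only [Category.assoc, ← MonoidalCategory.whiskerLeft_comp]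
      rw [← Category.assoc (A ◁ h), ← Category.assoc, Category.assoc (A ◁ h), hsnake]
      simp only [Category.assoc]
    rw [hR, hh]
    -- now both sides explicit
    have l1 : M.m ≫ (λ_ A).inv = (λ_ (A ⊗ A)).inv ≫ (𝟙_ C ◁ M.m) := by
      rw [leftUnitor_inv_naturality]
    have l2 := whisker_exchange ε M.m
    have l3 : ((As ⊗ A) ◁ M.m) ≫ (α_ As A A).hom = (α_ As A (A ⊗ A)).hom ≫ (As ◁ (A ◁ M.m)) := by
      rw [associator_naturality_right]
    have r3 : ((As ◁ M.m) ▷ A) ≫ (α_ As A A).hom = (α_ As (A ⊗ A) A).hom ≫ (As ◁ (M.m ▷ A)) := by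
      rw [associator_naturality_middle]
    have struct : (λ_ (A ⊗ A)).inv ≫ (ε ▷ (A ⊗ A)) ≫ (α_ As A (A ⊗ A)).hom ≫
        (As ◁ (α_ A A A).inv) =
        ((λ_ A).inv ▷ A) ≫ ((ε ▷ A) ▷ A) ≫ ((α_ As A A).hom ▷ A) ≫ (α_ As (A ⊗ A) A).hom := by
      monoidal
    calc M.m ≫ (λ_ A).inv ≫ (ε ▷ A) ≫ (α_ As A A).hom ≫ (As ◁ M.m)
        = (λ_ (A ⊗ A)).inv ≫ (ε ▷ (A ⊗ A)) ≫ (α_ As A (A ⊗ A)).hom ≫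
            (As ◁ (α_ A A A).inv) ≫ (As ◁ ((M.m ▷ A) ≫ M.m)) := by
          rw [reassoc_of% l1, reassoc_of% l2, reassoc_of% l3,
            ← MonoidalCategory.whiskerLeft_comp, h3]
          simp [MonoidalCategory.whiskerLeft_comp]
      _ = (((λ_ A).inv ≫ (ε ▷ A) ≫ (α_ As A A).hom ≫ (As ◁ M.m)) ▷ A) ≫
            (α_ As A A).hom ≫ (As ◁ M.m) := by
          rw [reassoc_of% struct]
          simp only [comp_whiskerRight, Category.assoc]
          rw [reassoc_of% r3, ← MonoidalCategory.whiskerLeft_comp]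
  · -- unit
    slice_lhs 1 2 => rw [leftUnitor_inv_naturality]
    slice_lhs 2 3 => rw [whisker_exchange]
    slice_lhs 3 4 => rw [associator_naturality_right]
    slice_lhs 4 5 => rw [← MonoidalCategory.whiskerLeft_comp, h2]
    monoidal
  · -- split mono
    set r : As ⟶ 𝟙_ C := (λ_ As).inv ≫ (M.u ▷ As) ≫ η with hr
    have e2 := whisker_exchange r M.m
    have e3 : (𝟙_ C ◁ M.m) ≫ (λ_ A).hom = (λ_ (A ⊗ A)).hom ≫ M.m := by
      rw [leftUnitor_naturality]
    -- the scalar: ε composed with (r ▷ A) and λ equals the unit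
    have hX : ε ≫ ((λ_ As).inv ▷ A) ≫ ((M.u ▷ As) ▷ A) ≫ (η ▷ A) ≫ (λ_ A).hom = M.u := by
      have := congrArg (fun f => M.u ≫ f) t1
      simp only [Category.comp_id] at this
      have s1 : M.u ≫ (ρ_ A).inv = (ρ_ (𝟙_ C)).inv ≫ (M.u ▷ 𝟙_ C) := by
        rw [rightUnitor_inv_naturality]
      have s2 := (whisker_exchange M.u ε).symm
      have s3 : (M.u ▷ (As ⊗ A)) ≫ (α_ A As A).inv = (α_ (𝟙_ C) As A).inv ≫ ((M.u ▷ As) ▷ A) := by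
        rw [associator_inv_naturality_left]
      rw [reassoc_of% s1, reassoc_of% s2, reassoc_of% s3] at this
      have struct2 : ε ≫ ((λ_ As).inv ▷ A) =
          (ρ_ (𝟙_ C)).inv ≫ (𝟙_ C ◁ ε) ≫ (α_ (𝟙_ C) As A).inv := by
        monoidal
      rw [reassoc_of% struct2]
      exact this
    have struct3 : (λ_ A).inv ≫ (ε ▷ A) ≫ (α_ As A A).hom ≫
        ((((λ_ As).inv ≫ (M.u ▷ As) ≫ η)) ▷ (A ⊗ A)) ≫ (λ_ (A ⊗ A)).hom =
        (λ_ A).inv ≫ ((ε ≫ ((λ_ As).inv ▷ A) ≫ ((M.u ▷ As) ▷ A) ≫ (η ▷ A) ≫ (λ_ A).hom) ▷ A) := by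
      monoidal
    calc h ≫ ((r ▷ A) ≫ (λ_ A).hom)
        = (λ_ A).inv ≫ (ε ▷ A) ≫ (α_ As A A).hom ≫ (r ▷ (A ⊗ A)) ≫
            (λ_ (A ⊗ A)).hom ≫ M.m := by
          rw [hh]
          simp only [Category.assoc]
          rw [← Category.assoc (As ◁ M.m), e2]
          simp only [Category.assoc, e3]
      _ = (λ_ A).inv ≫ (M.u ▷ A) ≫ M.m := by
          rw [hr, ← Category.assoc, ← Category.assoc, ← Category.assoc]
          rw [Category.assoc, Category.assoc, Category.assoc]
          rw [reassoc_of% struct3, hX]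
      _ = 𝟙 A := by rw [h1]; simp


end QAlg
end

section
/- Every finite-dimensional complex vector space V equipped with a structure of a dagger Frobenius right-involution monoid in the category of finite-dimensional Hilbert spaces admits a norm making its underlying *-algebra a C*-algebra. -/
noncomputable section

namespace QAlg

variable {V : Type*} [NormedAddCommGroup V] [InnerProductSpace ℂ V] [FiniteDimensional ℂ V]

/-- Monoid (unital associative algebra) axioms for a bilinear multiplication `m`
with unit `u` on `V`. -/
def IsMonoidH (m : V →ₗ[ℂ] V →ₗ[ℂ] V) (u : V) : Prop :=
  (∀ a b c : V, m (m a b) c = m a (m b c)) ∧ (∀ a : V, m u a = a) ∧ (∀ a : V, m a u = a)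

/-- The dagger Frobenius conditions `(id ⊗ m) ∘ (m† ⊗ id) = m† ∘ m = (m ⊗ id) ∘ (id ⊗ m†)`,
expressed equivalently via inner products (pairing both sides against elementary
tensors `a ⊗ b` and applying `c ⊗ d`, using the adjoints of one-sided
multiplications to eliminate the comultiplication). -/
def IsDagFrobH (m : V →ₗ[ℂ] V →ₗ[ℂ] V) : Prop :=
  (∀ a b c d : V,
    (inner ℂ (m a (LinearMap.adjoint (m.flip d) b)) c : ℂ) = inner ℂ (m a b) (m c d)) ∧
  (∀ a b c d : V,
    (inner ℂ (m (LinearMap.adjoint (m c) a) b) d : ℂ) = inner ℂ (m a b) (m c d))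

theorem stmt16 (m : V →ₗ[ℂ] V →ₗ[ℂ] V) (u : V)
    (hM : IsMonoidH m u) (hF : IsDagFrobH m) :
    -- the canonical right involution `st`, characterized by
    -- `(right multiplication by a)† = right multiplication by st a`,
    ∃ st : V → V, (∀ a : V, LinearMap.adjoint (m.flip a) = m.flip (st a)) ∧
    -- admits a norm making the *-algebra `(V, m, u, st)` a C*-algebra:
    ∃ N : V → ℝ,
      (∀ a : V, 0 ≤ N a) ∧ (∀ a : V, N a = 0 ↔ a = 0) ∧
      (∀ (c : ℂ) (a : V), N (c • a) = ‖c‖ * N a) ∧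
      (∀ a b : V, N (a + b) ≤ N a + N b) ∧
      (∀ a b : V, N (m a b) ≤ N a * N b) ∧
      (∀ a : V, N (st a) = N a) ∧
      (∀ a : V, N (m (st a) a) = N a * N a) := by
  obtain ⟨hassoc, hul, hur⟩ := hM
  obtain ⟨hF1, -⟩ := hF
  -- adjoint of right multiplication commutes with left multiplication
  have hcomm : ∀ a b d : V,
      m a (LinearMap.adjoint (m.flip d) b) = LinearMap.adjoint (m.flip d) (m a b) := by
    intro a b d
    apply ext_inner_right ℂ
    intro c
    rw [hF1 a b c d, LinearMap.adjoint_inner_left]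
    rfl
  set st : V → V := fun a => LinearMap.adjoint (m.flip a) u with hst
  have hadj : ∀ a : V, LinearMap.adjoint (m.flip a) = m.flip (st a) := by
    intro a
    apply LinearMap.ext
    intro x
    have := hcomm x u a
    rw [hur] at this
    simpa using this.symm
  refine ⟨st, hadj, ?_⟩
  set T : V → (V →L[ℂ] V) := fun a => LinearMap.toContinuousLinearMap (m.flip a) with hT
  refine ⟨fun a => ‖T a‖, fun a => norm_nonneg _, ?_, ?_, ?_, ?_, ?_, ?_⟩
  · intro a
    show ‖T a‖ = 0 ↔ a = 0
    constructor
    · intro h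
      have h0 : T a = 0 := norm_eq_zero.mp h
      have : a = T a u := by simp [hT, hul a]
      rw [this, h0]; rfl
    · intro h; subst h
      have : T (0 : V) = 0 := by ext x; simp [hT]
      rw [this, norm_zero]
  · intro c a
    show ‖T (c • a)‖ = ‖c‖ * ‖T a‖
    have : T (c • a) = c • T a := by ext x; simp [hT]
    rw [this]; exact norm_smul c (T a)
  · intro a b
    show ‖T (a+b)‖ ≤ ‖T a‖ + ‖T b‖
    have : T (a + b) = T a + T b := by ext x; simp [hT]
    rw [this]; exact norm_add_le _ _
  · intro a b
    show ‖T (m a b)‖ ≤ ‖T a‖ * ‖T b‖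
    have : T (m a b) = T b ∘L T a := by
      ext x; simp [hT, hassoc]
    rw [this]
    calc ‖T b ∘L T a‖ ≤ ‖T b‖ * ‖T a‖ := ContinuousLinearMap.opNorm_comp_le _ _
      _ = ‖T a‖ * ‖T b‖ := mul_comm _ _
  · intro a
    show ‖T (st a)‖ = ‖T a‖
    have : T (st a) = ContinuousLinearMap.adjoint (T a) := by
      rw [hT]
      dsimp only
      rw [← hadj a, ← LinearMap.adjoint_toContinuousLinearMap]
    rw [this, LinearIsometryEquiv.norm_map]
  · intro a
    show ‖T (m (st a) a)‖ = ‖T a‖ * ‖T a‖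
    have h1 : T (m (st a) a) = T a ∘L T (st a) := by
      ext x; simp [hT, hassoc]
    have h2 : T (st a) = ContinuousLinearMap.adjoint (T a) := by
      rw [hT]
      dsimp only
      rw [← hadj a, ← LinearMap.adjoint_toContinuousLinearMap]
    rw [h1, h2]
    have := ContinuousLinearMap.norm_adjoint_comp_self (ContinuousLinearMap.adjoint (T a))
    rw [ContinuousLinearMap.adjoint_adjoint] at this
    rw [this, LinearIsometryEquiv.norm_map]

end QAlg
end
end

section
/- A finite-dimensional complex *-algebra admits a C*-algebra norm if and only if it admits an inner product making it a special unitary dagger Frobenius involution monoid in the category of finite-dimensional Hilbert spaces; moreover, when these exist, both the C*-norm and the inner product making it special unitary dagger Frobenius are unique. -/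
set_option linter.unusedSectionVars false
set_option linter.unusedVariables false
set_option maxHeartbeats 1000000


noncomputable section

namespace QAlg

variable {V : Type*} [AddCommGroup V] [Module ℂ V] [FiniteDimensional ℂ V]

/-- `B` is a (Hermitian, positive definite) inner product on `V`,
conjugate-linear in its first argument. -/
def IsInnerProd (B : V → V → ℂ) : Prop :=
  (∀ x y : V, B x y = starRingEnd ℂ (B y x)) ∧
  (∀ x y z : V, B x (y + z) = B x y + B x z) ∧
  (∀ (c : ℂ) (x y : V), B x (c • y) = c * B x y) ∧
  (∀ x : V, x ≠ 0 → 0 < (B x x).re)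

/-- With respect to the inner product `B`, the monoid `(V, m, u)` is a special
unitary dagger Frobenius involution monoid whose involution corresponds to the
given `*`-operation `st`:
* both the right and the left action of any `a` have adjoint the corresponding
  action of `st a` (so the monoid is dagger Frobenius, its left and right
  involutions coincide — unitarity — and both equal the involution given by `st`);
* speciality `m ∘ m† = id`, expressed via any `B`-orthonormal basis using
  `m† y = ∑ i, e i ⊗ (m (st (e i)) y)`. -/
def IsSpecialUnitaryFrob (m : V →ₗ[ℂ] V →ₗ[ℂ] V) (st : V → V) (B : V → V → ℂ) : Prop :=
  (∀ (a x y : V), B (m x a) y = B x (m y (st a))) ∧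
  (∀ (a x y : V), B (m a x) y = B x (m (st a) y)) ∧
  (∀ (n : ℕ) (e : Module.Basis (Fin n) ℂ V),
    (∀ i j, B (e i) (e j) = if i = j then 1 else 0) →
    ∀ y : V, (∑ i, m (e i) (m (st (e i)) y)) = y)

/-- `N` is a C*-norm for the *-algebra `(V, m, st)`. -/
def IsCstarNorm (m : V →ₗ[ℂ] V →ₗ[ℂ] V) (st : V → V) (N : V → ℝ) : Prop :=
  (∀ a : V, 0 ≤ N a) ∧ (∀ a : V, N a = 0 ↔ a = 0) ∧
  (∀ (c : ℂ) (a : V), N (c • a) = ‖c‖ * N a) ∧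
  (∀ a b : V, N (a + b) ≤ N a + N b) ∧
  (∀ a b : V, N (m a b) ≤ N a * N b) ∧
  (∀ a : V, N (st a) = N a) ∧
  (∀ a : V, N (m (st a) a) = N a * N a)


section TraceLemmas
variable {W : Type*} [AddCommGroup W] [Module ℂ W] [FiniteDimensional ℂ W]

lemma trace_eq_sum_form {n : ℕ} (e : Module.Basis (Fin n) ℂ W) (B : W → W → ℂ)
    (h2 : ∀ x y z : W, B x (y + z) = B x y + B x z)
    (hs : ∀ (c : ℂ) (x y : W), B x (c • y) = c * B x y)
    (horth : ∀ i j, B (e i) (e j) = if i = j then 1 else 0)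
    (T : W →ₗ[ℂ] W) :
    LinearMap.trace ℂ W T = ∑ i, B (e i) (T (e i)) := by
  have key : ∀ (j : Fin n) (x : W), B (e j) x = e.repr x j := by
    intro j x
    set f : W →ₗ[ℂ] ℂ :=
      { toFun := fun y => B (e j) y
        map_add' := fun y z => h2 _ y z
        map_smul' := fun c y => hs c _ y } with hf
    have : B (e j) x = f x := rfl
    rw [this]
    conv_lhs => rw [← Module.Basis.sum_repr e x]
    rw [map_sum]
    simp only [map_smul, smul_eq_mul, hf, LinearMap.coe_mk, AddHom.coe_mk]
    rw [Finset.sum_congr rfl (fun i _ => by rw [horth j i])]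
    simp only [mul_ite, mul_one, mul_zero, Finset.sum_ite_eq, Finset.mem_univ, if_true]
  rw [LinearMap.trace_eq_matrix_trace ℂ e T, Matrix.trace]
  refine Finset.sum_congr rfl fun i _ => ?_
  rw [Matrix.diag_apply, LinearMap.toMatrix_apply, key]

end TraceLemmas

section AlgebraSide
variable (A : Type*) [Ring A] [Algebra ℂ A] [FiniteDimensional ℂ A]

/-- The trace of left multiplication, as a linear functional. -/
def tauL : A →ₗ[ℂ] ℂ := (LinearMap.trace ℂ A).comp (Algebra.lmul ℂ A).toLinearMap

variable {A}

lemma tauL_apply (a : A) : tauL A a = LinearMap.trace ℂ A (Algebra.lmul ℂ A a) := rfl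

lemma tauL_comm (x y : A) : tauL A (x * y) = tauL A (y * x) := by
  rw [tauL_apply, tauL_apply, map_mul (Algebra.lmul ℂ A), map_mul (Algebra.lmul ℂ A),
    LinearMap.trace_mul_comm]

/-- The matrix of left multiplication by `a` in the standard basis. -/
def lmat (a : A) : Matrix (Fin (Module.finrank ℂ A)) (Fin (Module.finrank ℂ A)) ℂ :=
  LinearMap.toMatrix (Module.finBasis ℂ A) (Module.finBasis ℂ A) (Algebra.lmul ℂ A a)

lemma tauL_eq_roots_sum (a : A) : tauL A a = (lmat a).charpoly.roots.sum := by
  rw [tauL_apply, LinearMap.trace_eq_matrix_trace ℂ (Module.finBasis ℂ A),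
    ← Matrix.trace_eq_sum_roots_charpoly]
  rfl

lemma lmat_roots_mem_spectrum (a : A) :
    ∀ z ∈ (lmat a).charpoly.roots, z ∈ spectrum ℂ a := by
  intro z hz
  have hroot : (lmat a).charpoly.IsRoot z :=
    Polynomial.isRoot_of_mem_roots hz
  have hdet : (z • (1 : Matrix (Fin (Module.finrank ℂ A)) (Fin (Module.finrank ℂ A)) ℂ)
      - lmat a).det = 0 := by
    have h1 : ((lmat a).charpoly).eval z = 0 := hroot
    have h2 : ((Polynomial.evalRingHom z).mapMatrix ((lmat a).charmatrix)).det = 0 := by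
      rw [← RingHom.map_det]
      exact h1
    rw [← h2]
    congr 1
    ext i j
    by_cases hij : i = j
    · subst hij
      simp [Matrix.charmatrix_apply_eq]
    · simp [Matrix.charmatrix_apply_ne _ _ _ hij, Matrix.one_apply_ne hij]
  have hnu : ¬ IsUnit (z • (1 : Matrix (Fin (Module.finrank ℂ A)) (Fin (Module.finrank ℂ A)) ℂ)
      - lmat a) := by
    rw [Matrix.isUnit_iff_isUnit_det, hdet]
    simp
  have hzm : z ∈ spectrum ℂ (lmat a) := by
    rw [spectrum.mem_iff, Algebra.algebraMap_eq_smul_one]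
    exact hnu
  have h2 : z ∈ spectrum ℂ (Algebra.lmul ℂ A a) := by
    have heq : lmat a = LinearMap.toMatrixAlgEquiv (Module.finBasis ℂ A) (Algebra.lmul ℂ A a) := rfl
    rw [heq, AlgEquiv.spectrum_eq] at hzm
    exact hzm
  exact AlgHom.spectrum_apply_subset (Algebra.lmul ℂ A) a h2

lemma nilpotent_of_roots_zero (a : A)
    (h : ∀ z ∈ (lmat a).charpoly.roots, z = 0) : ∃ k : ℕ, a ^ k = 0 := by
  set p := (lmat a).charpoly with hp
  have hmon : p.Monic := Matrix.charpoly_monic _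
  have hsplit : p.Splits := IsAlgClosed.splits p
  have hprod : p = (p.roots.map fun r => Polynomial.X - Polynomial.C r).prod :=
    hsplit.eq_prod_roots_of_monic hmon
  have hX : p = Polynomial.X ^ p.roots.card := by
    conv_lhs => rw [hprod]
    have : p.roots.map (fun r => Polynomial.X - Polynomial.C r)
        = p.roots.map (fun _ => (Polynomial.X : Polynomial ℂ)) := by
      apply Multiset.map_congr rfl
      intro z hz
      rw [h z hz]
      simp
    rw [this, Multiset.map_const', Multiset.prod_replicate]
  refine ⟨p.roots.card, ?_⟩
  have hCH : (Polynomial.aeval (lmat a)) p = 0 := Matrix.aeval_self_charpoly _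
  rw [hX] at hCH
  simp only [map_pow, Polynomial.aeval_X] at hCH
  have hf : (Algebra.lmul ℂ A a) ^ p.roots.card = 0 := by
    apply (LinearMap.toMatrixAlgEquiv (Module.finBasis ℂ A)).injective
    rw [map_pow, map_zero]
    exact hCH
  have hlm : Algebra.lmul ℂ A (a ^ p.roots.card) = 0 := by
    rw [map_pow]; exact hf
  have : a ^ Multiset.card p.roots = (Algebra.lmul ℂ A (a ^ Multiset.card p.roots)) 1 := by simp
  rw [this, hlm]
  simp

variable (A) in
/-- The canonical sesquilinear form of a finite-dimensional star algebra. -/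
def bForm [StarRing A] : A → A → ℂ := fun x y => tauL A (star x * y)

end AlgebraSide

section CStarSide
variable {A : Type*} [CStarAlgebra A] [FiniteDimensional ℂ A]

lemma spectrum_im_re (a : A) (z : ℂ) (hz : z ∈ spectrum ℂ (star a * a)) :
    z.im = 0 ∧ 0 ≤ z.re := by
  have hsa : IsSelfAdjoint (star a * a) := IsSelfAdjoint.star_mul_self a
  have him : z.im = 0 := hsa.im_eq_zero_of_mem_spectrum hz
  have hre : (z.re : ℂ) ∈ spectrum ℂ (star a * a) := by
    rw [← hsa.mem_spectrum_eq_re hz]; exact hz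
  have hmem : z.re ∈ spectrum ℝ (star a * a) := by
    rw [← spectrum.algebraMap_mem_iff ℂ]
    simpa using hre
  exact ⟨him, spectrum_star_mul_self_nonneg z.re hmem⟩

lemma tauL_conj_selfAdjoint (a : A) (ha : IsSelfAdjoint a) :
    starRingEnd ℂ (tauL A a) = tauL A a := by
  rw [tauL_eq_roots_sum, map_multiset_sum]
  congr 1
  rw [show (lmat a).charpoly.roots.map (starRingEnd ℂ)
      = (lmat a).charpoly.roots.map id from ?_, Multiset.map_id]
  apply Multiset.map_congr rfl
  intro z hz
  have hmem := lmat_roots_mem_spectrum a z hz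
  have := ha.mem_spectrum_eq_re hmem
  simp only [id]
  rw [this]
  exact Complex.conj_ofReal _

lemma tauL_star (z : A) : tauL A (star z) = starRingEnd ℂ (tauL A z) := by
  have h1 : starRingEnd ℂ (tauL A z) + starRingEnd ℂ (tauL A (star z))
      = tauL A z + tauL A (star z) := by
    have hsa : IsSelfAdjoint (z + star z) := by
      rw [IsSelfAdjoint, star_add, star_star, add_comm]
    have h := tauL_conj_selfAdjoint _ hsa
    rwa [map_add, map_add] at h
  have h2 : -Complex.I * (starRingEnd ℂ (tauL A z) - starRingEnd ℂ (tauL A (star z)))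
      = Complex.I * (tauL A z - tauL A (star z)) := by
    have hsa : IsSelfAdjoint (Complex.I • (z - star z)) := by
      rw [IsSelfAdjoint, star_smul, star_sub, star_star, Complex.star_def, Complex.conj_I,
        neg_smul, smul_sub, smul_sub, neg_sub]
    have h := tauL_conj_selfAdjoint _ hsa
    rw [map_smul, smul_eq_mul, map_mul, map_sub, map_sub, Complex.conj_I] at h
    exact h
  have h3 : starRingEnd ℂ (tauL A z) - starRingEnd ℂ (tauL A (star z))
      = -(tauL A z - tauL A (star z)) := by
    have h := congrArg (fun w => Complex.I * w) h2
    simp only [← mul_assoc, Complex.I_mul_I] at h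
    rw [show Complex.I * -Complex.I = 1 by rw [mul_neg, Complex.I_mul_I]; ring] at h
    rw [one_mul] at h
    linear_combination h
  linear_combination (-(1:ℂ)/2) * h1 + (-(1:ℂ)/2) * h3


lemma cstar_norm_eq (a : A) :
    ‖a‖ = Real.sqrt ((spectralRadius ℂ (star a * a)).toReal) := by
  have h1 : (spectralRadius ℂ (star a * a)).toReal = ‖star a * a‖ :=
    (IsSelfAdjoint.star_mul_self a).toReal_spectralRadius_complex_eq_norm
  rw [h1, CStarRing.norm_star_mul_self, Real.sqrt_mul_self (norm_nonneg a)]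

lemma tauL_star_mul_self (a : A) :
    (tauL A (star a * a)).im = 0 ∧ 0 ≤ (tauL A (star a * a)).re ∧
      (tauL A (star a * a) = 0 → a = 0) := by
  have hroots : ∀ z ∈ (lmat (star a * a)).charpoly.roots, z.im = 0 ∧ 0 ≤ z.re :=
    fun z hz => spectrum_im_re a z (lmat_roots_mem_spectrum _ z hz)
  have hsum : tauL A (star a * a) = (lmat (star a * a)).charpoly.roots.sum :=
    tauL_eq_roots_sum _
  set M := (lmat (star a * a)).charpoly.roots with hM
  have him : (M.sum).im = 0 := by
    have h := map_multiset_sum Complex.imAddGroupHom M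
    have hall : ∀ x ∈ M.map Complex.imAddGroupHom, x = 0 := by
      intro x hx
      obtain ⟨z, hz, rfl⟩ := Multiset.mem_map.mp hx
      exact (hroots z hz).1
    have : (M.sum).im = (M.map Complex.imAddGroupHom).sum := h
    rw [this, Multiset.sum_eq_zero hall]
  have hresum : (M.sum).re = (M.map Complex.reAddGroupHom).sum :=
    map_multiset_sum Complex.reAddGroupHom M
  have hnonneg : ∀ x ∈ M.map Complex.reAddGroupHom, 0 ≤ x := by
    intro x hx
    obtain ⟨z, hz, rfl⟩ := Multiset.mem_map.mp hx
    exact (hroots z hz).2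
  have hre : 0 ≤ (M.sum).re := by
    rw [hresum]
    exact Multiset.sum_nonneg hnonneg
  refine ⟨by rw [hsum]; exact him, by rw [hsum]; exact hre, ?_⟩
  intro h0
  rw [hsum] at h0
  have hzero : ∀ z ∈ M, z = 0 := by
    intro z hz
    have hmem : z.re ∈ M.map Complex.reAddGroupHom :=
      Multiset.mem_map.mpr ⟨z, hz, rfl⟩
    have hle : z.re ≤ (M.map Complex.reAddGroupHom).sum :=
      Multiset.single_le_sum hnonneg _ hmem
    rw [← hresum, h0] at hle
    simp only [Complex.zero_re] at hle
    have : z.re = 0 := le_antisymm hle (hroots z hz).2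
    exact Complex.ext this (hroots z hz).1
  obtain ⟨k, hk⟩ := nilpotent_of_roots_zero _ hzero
  have hb : IsSelfAdjoint (star a * a) := IsSelfAdjoint.star_mul_self a
  have hk2 : (star a * a) ^ (2 ^ k) = 0 :=
    pow_eq_zero_of_le (Nat.le_of_lt (Nat.lt_two_pow_self)) hk
  have hn : ‖star a * a‖₊ ^ (2 ^ k) = 0 := by
    rw [← hb.nnnorm_pow_two_pow, hk2, nnnorm_zero]
  have hb0 : star a * a = 0 := by
    have h1 : ‖star a * a‖₊ = 0 := pow_eq_zero_iff (by positivity) |>.mp hn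
    simpa using h1
  have h2 : ‖a‖ * ‖a‖ = 0 := by
    rw [← CStarRing.norm_star_mul_self, hb0, norm_zero]
  exact norm_eq_zero.mp (mul_self_eq_zero.mp h2)

lemma bForm_conj (x y : A) : bForm A x y = starRingEnd ℂ (bForm A y x) := by
  show tauL A (star x * y) = starRingEnd ℂ (tauL A (star y * x))
  rw [← tauL_star, star_mul, star_star]

lemma bForm_add (x y z : A) : bForm A x (y + z) = bForm A x y + bForm A x z := by
  show tauL A _ = _
  rw [mul_add, map_add]
  rfl

lemma bForm_smul (c : ℂ) (x y : A) : bForm A x (c • y) = c * bForm A x y := by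
  show tauL A _ = _
  rw [mul_smul_comm, map_smul, smul_eq_mul]
  rfl

lemma bForm_pos (x : A) (hx : x ≠ 0) : 0 < (bForm A x x).re := by
  obtain ⟨him, hre, hzero⟩ := tauL_star_mul_self x
  rcases lt_or_eq_of_le hre with h | h
  · exact h
  · exact absurd (hzero (Complex.ext h.symm him)) hx

lemma bForm_frob1 (a x y : A) : bForm A (x * a) y = bForm A x (y * star a) := by
  show tauL A _ = tauL A _
  rw [star_mul, mul_assoc, tauL_comm, mul_assoc]

lemma bForm_frob2 (a x y : A) : bForm A (a * x) y = bForm A x (star a * y) := by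
  show tauL A _ = tauL A _
  rw [star_mul, mul_assoc]

lemma bForm_special {n : ℕ} (e : Module.Basis (Fin n) ℂ A)
    (horth : ∀ i j, bForm A (e i) (e j) = if i = j then 1 else 0) :
    (∑ i, e i * star (e i)) = 1 := by
  set c : A := ∑ i, e i * star (e i) with hc
  have hall : ∀ x : A, bForm A x c = bForm A x 1 := by
    intro x
    have h1 : bForm A x c = ∑ i, bForm A (x * e i) (e i) := by
      show tauL A _ = _
      rw [hc, Finset.mul_sum, map_sum]
      refine Finset.sum_congr rfl fun i _ => ?_
      show _ = tauL A _
      rw [star_mul]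
      rw [mul_assoc (star (e i)) (star x) (e i)]
      rw [← mul_assoc (star x) (e i) (star (e i))]
      rw [tauL_comm]
    have h2 : (∑ i, bForm A (x * e i) (e i))
        = starRingEnd ℂ (∑ i, bForm A (e i) (x * e i)) := by
      rw [map_sum]
      exact Finset.sum_congr rfl fun i _ => bForm_conj _ _
    have h3 : (∑ i, bForm A (e i) (x * e i)) = tauL A x := by
      have ht := trace_eq_sum_form e (bForm A) bForm_add bForm_smul horth (Algebra.lmul ℂ A x)
      rw [tauL_apply, ht]
      rfl
    rw [h1, h2, h3, ← tauL_star]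
    show tauL A (star x) = tauL A (star x * 1)
    rw [mul_one]
  have hsub : bForm A (c - 1) (c - 1) = 0 := by
    have h := hall (c - 1)
    show tauL A _ = 0
    rw [mul_sub, map_sub]
    exact sub_eq_zero.mpr h
  by_contra hne
  have hcne : c - 1 ≠ 0 := sub_ne_zero.mpr hne
  have := bForm_pos _ hcne
  rw [hsub] at this
  simp at this

end CStarSide

@[reducible]
def ringOf (m : V →ₗ[ℂ] V →ₗ[ℂ] V) (u : V)
    (hassoc : ∀ a b c : V, m (m a b) c = m a (m b c))
    (hul : ∀ a : V, m u a = a) (hur : ∀ a : V, m a u = a) : Ring V :=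
  { (inferInstance : AddCommGroup V) with
    mul := fun a b => m a b
    one := u
    left_distrib := fun a b c => map_add (m a) b c
    right_distrib := fun a b c => by
      show m (a + b) c = m a c + m b c
      rw [map_add]
      rfl
    zero_mul := fun a => by
      show m 0 a = 0
      rw [map_zero]
      rfl
    mul_zero := fun a => map_zero (m a)
    mul_assoc := hassoc
    one_mul := hul
    mul_one := hur }


theorem stmt17 (m : V →ₗ[ℂ] V →ₗ[ℂ] V) (u : V) (st : V → V)
    (hassoc : ∀ a b c : V, m (m a b) c = m a (m b c))
    (hul : ∀ a : V, m u a = a) (hur : ∀ a : V, m a u = a)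
    (hadd : ∀ x y : V, st (x + y) = st x + st y)
    (hsmul : ∀ (c : ℂ) (x : V), st (c • x) = starRingEnd ℂ c • st x)
    (hinvol : ∀ x : V, st (st x) = x)
    (hantihom : ∀ x y : V, st (m x y) = m (st y) (st x))
    (hunit : st u = u) :
    ((∃ N : V → ℝ, IsCstarNorm m st N) ↔
      (∃ B : V → V → ℂ, IsInnerProd B ∧ IsSpecialUnitaryFrob m st B)) ∧
    (∀ N₁ N₂ : V → ℝ, IsCstarNorm m st N₁ → IsCstarNorm m st N₂ → N₁ = N₂) ∧
    (∀ B₁ B₂ : V → V → ℂ,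
      IsInnerProd B₁ ∧ IsSpecialUnitaryFrob m st B₁ →
      IsInnerProd B₂ ∧ IsSpecialUnitaryFrob m st B₂ → B₁ = B₂) := by
  classical
  constructor
  · constructor
    · -- C*-norm gives special unitary Frobenius inner product
      rintro ⟨N, hN0, hNeq, hNsmul, hNadd, hNmul, hNstar, hNcstar⟩
      letI ringV : Ring V := ringOf m u hassoc hul hur
      letI algV : Algebra ℂ V := Algebra.ofModule
        (fun r x y => by
          show m (r • x) y = r • m x y
          rw [map_smul]; rfl)
        (fun r x y => by
          show m x (r • y) = r • m x y
          exact map_smul (m x) r y)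
      letI starV : StarRing V :=
        { star := st
          star_involutive := hinvol
          star_mul := hantihom
          star_add := hadd }
      letI : StarModule ℂ V := ⟨fun c x => hsmul c x⟩
      letI ncg : NormedAddCommGroup V := AddGroupNorm.toNormedAddCommGroup
        { toFun := N
          map_zero' := (hNeq 0).mpr rfl
          add_le' := hNadd
          neg' := fun a => by
            have h1 : (-1 : ℂ) • a = -a := by simp
            rw [← h1, hNsmul]
            simp
          eq_zero_of_map_eq_zero' := fun a ha => (hNeq a).mp ha }
      letI : NormedRing V := { ncg, ringV with norm_mul_le := hNmul }
      letI : NormedAlgebra ℂ V := { algV with norm_smul_le := fun c a => le_of_eq (hNsmul c a) }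
      letI : CompleteSpace V := FiniteDimensional.complete ℂ V
      letI : CStarRing V := ⟨fun a => le_of_eq (hNcstar a).symm⟩
      letI : CStarAlgebra V := {}
      refine ⟨bForm V, ⟨fun x y => bForm_conj x y, fun x y z => bForm_add x y z,
        fun c x y => bForm_smul c x y, fun x hx => bForm_pos x hx⟩,
        fun a x y => bForm_frob1 a x y, fun a x y => bForm_frob2 a x y, ?_⟩
      intro n e horth y
      have hc : (∑ i, e i * star (e i)) = 1 := bForm_special e horth
      have h1 : ∀ i, m (e i) (m (st (e i)) y) = (e i * star (e i)) * y :=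
        fun i => (mul_assoc (e i) (star (e i)) y).symm
      calc (∑ i, m (e i) (m (st (e i)) y)) = ∑ i, (e i * star (e i)) * y :=
            Finset.sum_congr rfl fun i _ => h1 i
        _ = (∑ i, e i * star (e i)) * y := (Finset.sum_mul _ _ _).symm
        _ = 1 * y := by rw [hc]
        _ = y := one_mul y
    · -- special unitary Frobenius inner product gives a C*-norm
      rintro ⟨B, ⟨hconj, haddB, hsmulB, hpos⟩, hfrob1, hfrob2, hspec⟩
      have hB0 : ∀ x : V, B x 0 = 0 := by
        intro x
        have h := haddB x 0 0
        simpa using h.symm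
      letI core : InnerProductSpace.Core ℂ V :=
        { inner := fun x y => B x y
          conj_inner_symm := fun x y => (hconj x y).symm
          re_inner_nonneg := fun x => by
            show 0 ≤ (B x x).re
            by_cases hx : x = 0
            · subst hx; rw [hB0]; simp
            · exact le_of_lt (hpos x hx)
          add_left := fun x y z => by
            show B (x + y) z = B x z + B y z
            rw [hconj (x + y) z, haddB, map_add, ← hconj, ← hconj]
          smul_left := fun x y r => by
            show B (r • x) y = starRingEnd ℂ r * B x y
            rw [hconj (r • x) y, hsmulB, map_mul, ← hconj]
          definite := fun x hx => by
            by_contra hne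
            have hx' : B x x = 0 := hx
            have h := hpos x hne
            rw [hx'] at h
            simp at h }
      letI ncg : NormedAddCommGroup V := core.toNormedAddCommGroup
      letI ips : InnerProductSpace ℂ V := InnerProductSpace.ofCore core.toCore
      letI : CompleteSpace V := FiniteDimensional.complete ℂ V
      have hinner : ∀ x y : V, (inner ℂ x y : ℂ) = B x y := fun _ _ => rfl
      set L : V → (V →L[ℂ] V) := fun a => LinearMap.toContinuousLinearMap (m a) with hL
      have hLapp : ∀ a y : V, L a y = m a y := fun _ _ => rfl
      have hadj : ∀ a : V, ContinuousLinearMap.adjoint (L a) = L (st a) := by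
        intro a
        have h1 : L a = ContinuousLinearMap.adjoint (L (st a)) := by
          rw [ContinuousLinearMap.eq_adjoint_iff]
          intro x y
          rw [hinner, hinner, hLapp, hLapp]
          exact hfrob2 a x y
        rw [h1, ContinuousLinearMap.adjoint_adjoint]
      have hcomp : ∀ a b : V, L (m a b) = L a * L b := by
        intro a b
        ext y
        show m (m a b) y = m a (m b y)
        exact hassoc a b y
      refine ⟨fun a => ‖L a‖, fun a => norm_nonneg _, ?_, ?_, ?_, ?_, ?_, ?_⟩
      · intro a
        constructor
        · intro h
          have hz : L a = 0 := by
            rwa [norm_eq_zero] at h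
          have h2 := congrArg (fun T : V →L[ℂ] V => T u) hz
          simpa [hLapp, hur a] using h2
        · intro h; subst h
          show ‖L 0‖ = 0
          have h0 : L 0 = 0 := by ext y; show m 0 y = 0; simp
          rw [h0, norm_zero]
      · intro c a
        show ‖L (c • a)‖ = ‖c‖ * ‖L a‖
        have h0 : L (c • a) = c • L a := by
          ext y; show m (c • a) y = c • (m a y); rw [map_smul]; rfl
        rw [h0]
        exact norm_smul c (L a)
      · intro a b
        show ‖L (a + b)‖ ≤ ‖L a‖ + ‖L b‖
        have h0 : L (a + b) = L a + L b := by
          ext y; show m (a + b) y = m a y + m b y; rw [map_add]; rfl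
        rw [h0]
        exact norm_add_le _ _
      · intro a b
        show ‖L (m a b)‖ ≤ ‖L a‖ * ‖L b‖
        rw [hcomp]
        exact norm_mul_le _ _
      · intro a
        show ‖L (st a)‖ = ‖L a‖
        rw [← hadj]
        exact LinearIsometryEquiv.norm_map ContinuousLinearMap.adjoint (L a)
      · intro a
        show ‖L (m (st a) a)‖ = ‖L a‖ * ‖L a‖
        rw [hcomp, ← hadj, ← ContinuousLinearMap.star_eq_adjoint]
        exact CStarRing.norm_star_mul_self
  constructor
  · -- uniqueness of the C*-norm
    intro N₁ N₂ h₁ h₂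
    letI ringV : Ring V := ringOf m u hassoc hul hur
    letI algV : Algebra ℂ V := Algebra.ofModule
      (fun r x y => by
        show m (r • x) y = r • m x y
        rw [map_smul]; rfl)
      (fun r x y => by
        show m x (r • y) = r • m x y
        exact map_smul (m x) r y)
    letI starV : StarRing V :=
      { star := st
        star_involutive := hinvol
        star_mul := hantihom
        star_add := hadd }
    letI : StarModule ℂ V := ⟨fun c x => hsmul c x⟩
    have key : ∀ N : V → ℝ, IsCstarNorm m st N → ∀ a : V,
        N a = Real.sqrt ((spectralRadius ℂ (star a * a)).toReal) := by
      intro N hN a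
      obtain ⟨hN0, hNeq, hNsmul, hNadd, hNmul, hNstar, hNcstar⟩ := hN
      letI ncg : NormedAddCommGroup V := AddGroupNorm.toNormedAddCommGroup
        { toFun := N
          map_zero' := (hNeq 0).mpr rfl
          add_le' := hNadd
          neg' := fun b => by
            have h1 : (-1 : ℂ) • b = -b := by simp
            rw [← h1, hNsmul]
            simp
          eq_zero_of_map_eq_zero' := fun b hb => (hNeq b).mp hb }
      letI : NormedRing V := { ncg, ringV with norm_mul_le := hNmul }
      letI : NormedAlgebra ℂ V := { algV with norm_smul_le := fun c b => le_of_eq (hNsmul c b) }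
      letI : CompleteSpace V := FiniteDimensional.complete ℂ V
      letI : CStarRing V := ⟨fun b => le_of_eq (hNcstar b).symm⟩
      letI : CStarAlgebra V := {}
      have h1 : ‖a‖ = Real.sqrt ((spectralRadius ℂ (star a * a)).toReal) := cstar_norm_eq a
      exact h1
    funext a
    rw [key N₁ h₁ a, key N₂ h₂ a]
  · -- uniqueness of the inner product
    rintro B₁ B₂ ⟨h1i, h1f⟩ ⟨h2i, h2f⟩
    letI ringV : Ring V := ringOf m u hassoc hul hur
    letI algV : Algebra ℂ V := Algebra.ofModule
      (fun r x y => by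
        show m (r • x) y = r • m x y
        rw [map_smul]; rfl)
      (fun r x y => by
        show m x (r • y) = r • m x y
        exact map_smul (m x) r y)
    letI starV : StarRing V :=
      { star := st
        star_involutive := hinvol
        star_mul := hantihom
        star_add := hadd }
    have key : ∀ Bf : V → V → ℂ, IsInnerProd Bf → IsSpecialUnitaryFrob m st Bf →
        ∀ x y : V, Bf x y = tauL V (star x * y) := by
      intro Bf hi hf x y
      obtain ⟨hconj, haddB, hsmulB, hpos⟩ := hi
      obtain ⟨hf1, hf2, hf3⟩ := hf
      have hB0 : ∀ w : V, Bf w 0 = 0 := by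
        intro w
        have h := haddB w 0 0
        simpa using h.symm
      letI core : InnerProductSpace.Core ℂ V :=
        { inner := fun x y => Bf x y
          conj_inner_symm := fun x y => (hconj x y).symm
          re_inner_nonneg := fun x => by
            show 0 ≤ (Bf x x).re
            by_cases hx : x = 0
            · subst hx; rw [hB0]; simp
            · exact le_of_lt (hpos x hx)
          add_left := fun x y z => by
            show Bf (x + y) z = Bf x z + Bf y z
            rw [hconj (x + y) z, haddB, map_add, ← hconj, ← hconj]
          smul_left := fun x y r => by
            show Bf (r • x) y = starRingEnd ℂ r * Bf x y
            rw [hconj (r • x) y, hsmulB, map_mul, ← hconj]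
          definite := fun x hx => by
            by_contra hne
            have hx' : Bf x x = 0 := hx
            have h := hpos x hne
            rw [hx'] at h
            simp at h }
      letI ncg : NormedAddCommGroup V := core.toNormedAddCommGroup
      letI ips : InnerProductSpace ℂ V := InnerProductSpace.ofCore core.toCore
      set onb := stdOrthonormalBasis ℂ V with honb
      set e := onb.toBasis with he
      have heo : ∀ i, e i = onb i := fun i => by rw [he, OrthonormalBasis.coe_toBasis]
      have horth : ∀ i j, Bf (e i) (e j) = if i = j then 1 else 0 := by
        intro i j
        have ho := onb.orthonormal
        rw [orthonormal_iff_ite] at ho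
        have h := ho i j
        rw [heo, heo]
        exact h
      have hc : (∑ i, e i * star (e i)) = 1 := by
        have h := hf3 _ e horth 1
        have h2 : ∀ i, m (e i) (m (st (e i)) 1) = e i * star (e i) := by
          intro i
          show e i * (star (e i) * 1) = _
          rw [mul_one]
        rw [Finset.sum_congr rfl fun i _ => h2 i] at h
        exact h
      set Bx : V →ₗ[ℂ] ℂ :=
        { toFun := fun w => Bf x w
          map_add' := haddB x
          map_smul' := fun c w => hsmulB c x w } with hBx
      have main : tauL V (star x * y) = Bf x y := by
        rw [tauL_apply]
        rw [trace_eq_sum_form e Bf haddB hsmulB horth (Algebra.lmul ℂ V (star x * y))]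
        have step1 : ∀ i : Fin (Module.finrank ℂ V),
            Bf (e i) ((Algebra.lmul ℂ V (star x * y)) (e i)) = Bf (x * e i) (y * e i) := by
          intro i
          have ha : (Algebra.lmul ℂ V (star x * y)) (e i) = star x * (y * e i) := by
            show (star x * y) * e i = _
            rw [mul_assoc]
          rw [ha]
          exact (hf2 x (e i) (y * e i)).symm
        rw [Finset.sum_congr rfl fun i _ => step1 i]
        have step2 : ∀ i : Fin (Module.finrank ℂ V),
            Bf (x * e i) (y * e i) = Bf x ((y * e i) * star (e i)) :=
          fun i => hf1 (e i) x (y * e i)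
        rw [Finset.sum_congr rfl fun i _ => step2 i]
        have hmap : (∑ i, Bf x ((y * e i) * star (e i)))
            = Bx (∑ i, (y * e i) * star (e i)) := by
          rw [map_sum]
          rfl
        rw [hmap]
        have hsum : (∑ i, (y * e i) * star (e i)) = y := by
          have h3 : ∀ i : Fin (Module.finrank ℂ V),
              (y * e i) * star (e i) = y * (e i * star (e i)) :=
            fun i => mul_assoc y (e i) (star (e i))
          rw [Finset.sum_congr rfl fun i _ => h3 i, ← Finset.mul_sum, hc, mul_one]
        rw [hsum]
        rfl
      exact main.symm
    funext x y
    rw [key B₁ ⟨h1i.1, h1i.2.1, h1i.2.2.1, h1i.2.2.2⟩ h1f x y,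
      key B₂ ⟨h2i.1, h2i.2.1, h2i.2.2.1, h2i.2.2.2⟩ h2f x y]


end QAlg
end
end

section
/- In the category of finite-dimensional complex Hilbert spaces, every normal linear endomorphism f : A → A (f ∘ f† = f† ∘ f) is internally diagonalizable: there exists a commutative dagger Frobenius monoid (A, m, u) and a vector φ ∈ A such that f = m ∘ (φ ⊗ id_A). Conversely, every internally diagonalizable endomorphism is normal. -/
noncomputable section

namespace QAlg

variable {V : Type*} [NormedAddCommGroup V] [InnerProductSpace ℂ V] [FiniteDimensional ℂ V]

section Aux

set_option linter.unusedSectionVars false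

local notation "⟪" x ", " y "⟫" => @inner ℂ _ _ x y

open Module.End in
theorem exists_eigenbasis (f : V →ₗ[ℂ] V)
    (hf : f ∘ₗ LinearMap.adjoint f = LinearMap.adjoint f ∘ₗ f) :
    ∃ (ι : Type) (_ : Fintype ι) (b : OrthonormalBasis ι ℂ V) (μ : ι → ℂ),
      ∀ i, f (b i) = μ i • b i := by
  classical
  set g := LinearMap.adjoint f with hg
  set A := f + g with hA'
  set B := Complex.I • f - Complex.I • g with hB'
  have hff : f * g = g * f := hf
  have hA : A.IsSymmetric := by
    intro x y
    simp only [hA', LinearMap.add_apply, inner_add_left, inner_add_right, hg,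
      LinearMap.adjoint_inner_left, LinearMap.adjoint_inner_right]
    rw [add_comm]
  have hB : B.IsSymmetric := by
    intro x y
    simp only [hB', LinearMap.sub_apply, LinearMap.smul_apply, inner_sub_left, inner_sub_right,
      inner_smul_left, inner_smul_right, hg,
      LinearMap.adjoint_inner_left, LinearMap.adjoint_inner_right, Complex.conj_I]
    ring
  have hAB : Commute A B := by
    show A * B = B * A
    rw [hA', hB']
    simp only [mul_sub, sub_mul, add_mul, mul_add, mul_smul_comm, smul_mul_assoc, hff,
      smul_add, smul_sub]
    abel
  set S : ℂ × ℂ → Submodule ℂ V := fun p => eigenspace A p.2 ⊓ eigenspace B p.1 with hS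
  have hInt : DirectSum.IsInternal S := hA.directSum_isInternal_of_commute hB hAB
  have hOrth : OrthogonalFamily ℂ (fun p => S p) (fun p => (S p).subtypeₗᵢ) :=
    LinearMap.IsSymmetric.orthogonalFamily_eigenspace_inf_eigenspace hA hB
  haveI : Fintype {p : ℂ × ℂ // S p ≠ ⊥} :=
    hInt.submodule_iSupIndep.fintypeNeBotOfFiniteDimensional
  have hInt' : DirectSum.IsInternal (fun p : {p // S p ≠ ⊥} => S p) :=
    DirectSum.isInternal_ne_bot_iff.mpr hInt
  have hOrth' : OrthogonalFamily ℂ (fun p : {p // S p ≠ ⊥} => S p.1)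
      (fun p => (S p.1).subtypeₗᵢ) := fun i j hij => hOrth (Subtype.coe_ne_coe.mpr hij)
  let b := hInt'.collectedOrthonormalBasis hOrth' (fun p => stdOrthonormalBasis ℂ (S p.1))
  refine ⟨_, inferInstance, b, fun i => (1/2 : ℂ) * i.1.1.2 - (Complex.I/2) * i.1.1.1, ?_⟩
  intro i
  have hmem : b i ∈ S i.1.1 := hInt'.collectedOrthonormalBasis_mem hOrth' _ i
  obtain ⟨h1, h2⟩ := hmem
  rw [SetLike.mem_coe, mem_eigenspace_iff] at h1
  rw [SetLike.mem_coe, mem_eigenspace_iff] at h2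
  have hfv : f (b i) = (1/2 : ℂ) • A (b i) - (Complex.I/2) • B (b i) := by
    simp only [hA', hB', LinearMap.add_apply, LinearMap.sub_apply, LinearMap.smul_apply,
      smul_sub, smul_add, smul_smul]
    ring_nf
    rw [Complex.I_sq]
    module
  rw [hfv, h1, h2, smul_smul, smul_smul, ← sub_smul]

variable {ι : Type} [Fintype ι] (b : OrthonormalBasis ι ℂ V)

/-- Coordinatewise multiplication w.r.t. an orthonormal basis. -/
def qmul (b : OrthonormalBasis ι ℂ V) : V →ₗ[ℂ] V →ₗ[ℂ] V :=
  LinearMap.mk₂ ℂ (fun x y => ∑ i, (⟪b i, x⟫ * ⟪b i, y⟫) • b i)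
    (fun x x' y => by simp [inner_add_right, add_mul, add_smul, Finset.sum_add_distrib])
    (fun c x y => by simp [inner_smul_right, mul_assoc, smul_smul, Finset.smul_sum])
    (fun x y y' => by simp [inner_add_right, mul_add, add_smul, Finset.sum_add_distrib])
    (fun c x y => by
      simp [inner_smul_right, Finset.smul_sum, smul_smul, mul_left_comm])

lemma inner_qmul (x y : V) (j : ι) : ⟪b j, qmul b x y⟫ = ⟪b j, x⟫ * ⟪b j, y⟫ := by
  classical
  simp [qmul, LinearMap.mk₂_apply, inner_sum, inner_smul_right,
    orthonormal_iff_ite.mp b.orthonormal, Finset.sum_ite_eq, mul_comm]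

lemma basis_ext {x y : V} (h : ∀ j, ⟪b j, x⟫ = ⟪b j, y⟫) : x = y := by
  apply b.repr.injective
  ext j
  simpa [b.repr_apply_apply] using h j

lemma inner_adjoint (T : V →ₗ[ℂ] V) (x : V) (j : ι) :
    ⟪b j, LinearMap.adjoint T x⟫ = ⟪T (b j), x⟫ := by
  rw [← inner_conj_symm, LinearMap.adjoint_inner_left, inner_conj_symm]

lemma qmul_basis (d : V) (j : ι) : qmul b (b j) d = ⟪b j, d⟫ • b j := by
  classical
  apply basis_ext b
  intro k
  rw [inner_qmul]
  simp [inner_smul_right, orthonormal_iff_ite.mp b.orthonormal]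
  by_cases h : k = j <;> simp [h, mul_comm]

lemma qmul_comm (x y : V) : qmul b x y = qmul b y x := by
  apply basis_ext b
  intro j
  rw [inner_qmul, inner_qmul, mul_comm]

lemma inner_expand (x y : V) : ⟪x, y⟫ = ∑ j, (starRingEnd ℂ) ⟪b j, x⟫ * ⟪b j, y⟫ := by
  rw [← b.sum_inner_mul_inner x y]
  exact Finset.sum_congr rfl fun j _ => by rw [← inner_conj_symm x (b j)]

lemma inner_unit (j : ι) : ⟪b j, ∑ i, b i⟫ = 1 := by
  classical
  simp [inner_sum, orthonormal_iff_ite.mp b.orthonormal]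

theorem key (μ : ι → ℂ) (f : V →ₗ[ℂ] V) (hfb : ∀ i, f (b i) = μ i • b i) :
    ∃ (m : V →ₗ[ℂ] V →ₗ[ℂ] V) (u : V), IsMonoidH m u ∧ (∀ a b : V, m a b = m b a) ∧
      IsDagFrobH m ∧ ∃ φ : V, f = m φ := by
  classical
  refine ⟨qmul b, ∑ i, b i, ⟨?_, ?_, ?_⟩, qmul_comm b, ⟨?_, ?_⟩, ∑ i, μ i • b i, ?_⟩
  · intro x y z
    apply basis_ext b
    intro j
    simp only [inner_qmul]
    ring
  · intro x
    apply basis_ext b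
    intro j
    rw [inner_qmul, inner_unit, one_mul]
  · intro x
    apply basis_ext b
    intro j
    rw [inner_qmul, inner_unit, mul_one]
  · -- Frobenius 1
    intro a x c d
    rw [inner_expand b, inner_expand b]
    refine Finset.sum_congr rfl fun j _ => ?_
    rw [inner_qmul, inner_qmul, inner_qmul, inner_adjoint, LinearMap.flip_apply,
      qmul_basis, inner_smul_left]
    simp only [map_mul, Complex.conj_conj]
    ring
  · -- Frobenius 2
    intro a x c d
    rw [inner_expand b, inner_expand b]
    refine Finset.sum_congr rfl fun j _ => ?_
    rw [inner_qmul, inner_qmul, inner_qmul, inner_adjoint, qmul_comm,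
      qmul_basis, inner_smul_left]
    simp only [map_mul, Complex.conj_conj]
    ring
  · -- f = qmul b φ
    apply LinearMap.ext
    intro x
    apply basis_ext b
    intro j
    rw [inner_qmul]
    have hφ : ⟪b j, ∑ i, μ i • b i⟫ = μ j := by
      simp [inner_sum, inner_smul_right, orthonormal_iff_ite.mp b.orthonormal]
    rw [hφ]
    conv_lhs => rw [← b.sum_repr' x]
    simp only [map_sum, map_smul, hfb, inner_sum, inner_smul_right, smul_smul]
    simp [orthonormal_iff_ite.mp b.orthonormal, mul_comm]

end Aux

/-- A linear endomorphism of a finite-dimensional complex Hilbert space is normal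
iff it is internally diagonalizable: it is the action `m ∘ (φ ⊗ id)` of an element
`φ` of a commutative dagger Frobenius monoid on `V`. -/
theorem stmt18 (f : V →ₗ[ℂ] V) :
    f ∘ₗ LinearMap.adjoint f = LinearMap.adjoint f ∘ₗ f ↔
      ∃ (m : V →ₗ[ℂ] V →ₗ[ℂ] V) (u : V), IsMonoidH m u ∧ (∀ a b : V, m a b = m b a) ∧
        IsDagFrobH m ∧ ∃ φ : V, f = m φ := by
  constructor
  · intro hf
    obtain ⟨ι, _, b, μ, hfb⟩ := exists_eigenbasis f hf
    exact key b μ f hfb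
  · rintro ⟨m, u, ⟨hassoc, hul, hur⟩, hcomm, ⟨hF1, hF2⟩, φ, hφ⟩
    have hadj : ∀ c : V, LinearMap.adjoint (m c) = m (LinearMap.adjoint (m c) u) := by
      intro c
      apply LinearMap.ext
      intro a
      apply ext_inner_right ℂ
      intro d
      rw [LinearMap.adjoint_inner_left]
      have := hF2 u a c d
      rw [hul] at this
      rw [← this]
    rw [hφ, hadj φ]
    apply LinearMap.ext
    intro x
    simp only [LinearMap.comp_apply]
    rw [← hassoc, hcomm φ (LinearMap.adjoint (m φ) u), hassoc]


end QAlg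
end
end

section
/- An endomorphism f : A → A in a braided monoidal dagger category is internally diagonalizable by a commutative dagger Frobenius monoid (A, m, u) (i.e. f = m ∘ (φ ⊗ id_A) for some state φ : I → A) if and only if f is compatible with (A, m, u), meaning m ∘ (f ⊗ id_A) = f ∘ m = m ∘ (id_A ⊗ f). -/
open CategoryTheory MonoidalCategory

namespace QAlg

variable {C : Type*} [Category C] [MonoidalCategory C]

variable {D : MonoidalDagger C}

theorem stmt19 {C : Type*} [Category C] [MonoidalCategory C] [BraidedCategory C]
    (D : MonoidalDagger C) {A : C} (M : MonoidOn A) (hM : M.IsMonoid)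
    (hComm : (β_ A A).hom ≫ M.m = M.m) (hF : M.IsDagFrobenius D)
    (f : A ⟶ A) :
    (∃ φ : 𝟙_ C ⟶ A, f = (λ_ A).inv ≫ (φ ▷ A) ≫ M.m) ↔
      ((f ▷ A) ≫ M.m = M.m ≫ f ∧ (A ◁ f) ≫ M.m = M.m ≫ f) := by
  constructor
  · rintro ⟨φ, rfl⟩
    have key : (((λ_ A).inv ≫ φ ▷ A ≫ M.m) ▷ A) ≫ M.m =
        M.m ≫ ((λ_ A).inv ≫ φ ▷ A ≫ M.m) := by
      have coh : (λ_ A).inv ▷ A ≫ (α_ (𝟙_ C) A A).hom = (λ_ (A ⊗ A)).inv := by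
        coherence
      calc (((λ_ A).inv ≫ φ ▷ A ≫ M.m) ▷ A) ≫ M.m
          = (λ_ A).inv ▷ A ≫ φ ▷ A ▷ A ≫ (M.m ▷ A ≫ M.m) := by
            simp [comp_whiskerRight]
        _ = (λ_ A).inv ▷ A ≫ (φ ▷ A ▷ A ≫ (α_ A A A).hom) ≫ A ◁ M.m ≫ M.m := by
            rw [hM.2.2]; simp
        _ = ((λ_ A).inv ▷ A ≫ (α_ (𝟙_ C) A A).hom) ≫ (φ ▷ (A ⊗ A) ≫ A ◁ M.m) ≫ M.m := by
            rw [MonoidalCategory.associator_naturality_left]; simp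
        _ = (λ_ (A ⊗ A)).inv ≫ (𝟙_ C ◁ M.m ≫ φ ▷ A) ≫ M.m := by
            rw [coh, ← MonoidalCategory.whisker_exchange]
        _ = (M.m ≫ (λ_ A).inv) ≫ φ ▷ A ≫ M.m := by
            rw [MonoidalCategory.leftUnitor_inv_naturality]; simp
        _ = M.m ≫ ((λ_ A).inv ≫ φ ▷ A ≫ M.m) := by simp
    refine ⟨key, ?_⟩
    have hβ : (β_ A A).inv ≫ M.m = M.m := by
      conv_lhs => rw [← hComm]
      simp
    calc A ◁ ((λ_ A).inv ≫ φ ▷ A ≫ M.m) ≫ M.m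
        = (β_ A A).inv ≫ ((((λ_ A).inv ≫ φ ▷ A ≫ M.m) ▷ A) ≫ (β_ A A).hom) ≫ M.m := by
          rw [BraidedCategory.braiding_naturality_left]; simp
      _ = (β_ A A).inv ≫ (((λ_ A).inv ≫ φ ▷ A ≫ M.m) ▷ A) ≫ M.m := by
          rw [Category.assoc, hComm]
      _ = (β_ A A).inv ≫ M.m ≫ ((λ_ A).inv ≫ φ ▷ A ≫ M.m) := by rw [key]
      _ = M.m ≫ ((λ_ A).inv ≫ φ ▷ A ≫ M.m) := by rw [← Category.assoc, hβ]
  · rintro ⟨h1, h2⟩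
    refine ⟨M.u ≫ f, ?_⟩
    rw [comp_whiskerRight]
    simp only [Category.assoc]
    rw [h1]
    slice_rhs 2 3 => rw [hM.1]
    simp


end QAlg
end
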